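/- arXiv:1801.07197 — 4 statements merged into one kernel-verified Lean document; each statement's English description precedes it below -/
import Mathlib

section
/- Let k be a positive integer, ε > 0 a real number, and d a positive integer. If G is a finite group generated by d elements such that P_{G,w_k}(g) ≥ ε for some g ∈ G, where w_k = [x_1,…,x_k] is the left-normed commutator word, then G has a normal subgroup N which is nilpotent of class less than k (γ_k(N) = 1) and whose index satisfies |G/N| ≤ n!^{n!^d}, where n = ⌊k/ε⌋. -/
open scoped Classical
open scoped commutatorElement

/-- The commutator `[x, y] = x⁻¹y⁻¹xy` (the convention used in the paper). -/
def pcomm {G : Type*} [Group G] (x y : G) : G := x⁻¹ * y⁻¹ * x * y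

/-- The left-normed commutator word `w_k = [x₁, …, x_k] ∈ F_k`,
defined inductively by `w₁ = x₁` and `w_{j+1} = [w_j, x_{j+1}]`. -/
def commWord : (k : ℕ) → FreeGroup (Fin k)
  | 0 => 1
  | 1 => FreeGroup.of 0
  | (k + 2) =>
      pcomm (FreeGroup.map Fin.castSucc (commWord (k + 1))) (FreeGroup.of (Fin.last (k + 1)))

/-- The left-normed commutator `[g₁, …, g_k]` of group elements. -/
def commElt {G : Type*} [Group G] : {k : ℕ} → (Fin k → G) → G
  | 0, _ => 1
  | 1, f => f 0
  | (_ + 2), f => pcomm (commElt (fun i => f i.castSucc)) (f (Fin.last _))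

/-- The word `[x₁², x₂, …, x_k] ∈ F_k`, defined inductively by
`u₁ = x₁²` and `u_{j+1} = [u_j, x_{j+1}]`. -/
def sqCommWord : (k : ℕ) → FreeGroup (Fin k)
  | 0 => 1
  | 1 => FreeGroup.of 0 ^ 2
  | (k + 2) =>
      pcomm (FreeGroup.map Fin.castSucc (sqCommWord (k + 1))) (FreeGroup.of (Fin.last (k + 1)))

/-- `P_{G,w}(g) = |w_G⁻¹(g)| / |G|^k`, the probability that the word map of `w`
takes the value `g` on a uniformly random `k`-tuple. -/
noncomputable def wordProb {k : ℕ} {G : Type*} [Group G] (w : FreeGroup (Fin k)) (g : G) : ℝ :=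
  (Nat.card {f : Fin k → G // FreeGroup.lift f w = g} : ℝ) / (Nat.card G : ℝ) ^ k

/-- A group is residually finite if every nontrivial element is excluded by
some normal subgroup of finite index. -/
def ResiduallyFinite (Γ : Type*) [Group Γ] : Prop :=
  ∀ g : Γ, g ≠ 1 → ∃ Δ : Subgroup Γ, Δ.Normal ∧ Δ.FiniteIndex ∧ g ∉ Δ

/-- A word `w ≠ 1` is a probabilistic identity of `Γ` if for some `ε > 0` every
finite quotient `H` of `Γ` satisfies `P_{H,w}(1) ≥ ε`. -/
def IsProbIdentity {k : ℕ} (Γ : Type*) [Group Γ] (w : FreeGroup (Fin k)) : Prop :=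
  w ≠ 1 ∧ ∃ ε : ℝ, 0 < ε ∧
    ∀ (Δ : Subgroup Γ) [Δ.Normal], Δ.FiniteIndex → ε ≤ wordProb w (1 : Γ ⧸ Δ)

/-- `G(H)`: the intersection of the kernels of all homomorphisms from `G` to `H`. -/
def kerInt (G H : Type*) [Group G] [Group H] : Subgroup G := ⨅ φ : G →* H, φ.ker

/-- A word `1 ≠ w ∈ F_k` is good if for every `ε > 0` there is a word `1 ≠ v ∈ F_m`,
depending only on `w` and `ε`, which is an identity of every finite group `G`
satisfying `P_{G,w}(g) ≥ ε` for some `g ∈ G`. -/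
def IsGood {k : ℕ} (w : FreeGroup (Fin k)) : Prop :=
  w ≠ 1 ∧ ∀ ε : ℝ, 0 < ε → ∃ (m : ℕ) (v : FreeGroup (Fin m)), v ≠ 1 ∧
    ∀ (G : Type) [Group G] [Finite G],
      (∃ g : G, ε ≤ wordProb w g) → ∀ f : Fin m → G, FreeGroup.lift f v = 1

set_option linter.unusedSectionVars false
set_option linter.unusedVariables false

section Aux

variable {G : Type*} [Group G]

lemma pcomm_eq_one_iff (a b : G) : pcomm a b = 1 ↔ a * b = b * a := by
  constructor
  · intro H
    have h2 : b * (a * (a⁻¹ * b⁻¹ * a * b)) = b * (a * 1) := by rw [← H]; rfl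
    simpa [mul_assoc] using h2
  · intro H
    show a⁻¹ * b⁻¹ * a * b = 1
    rw [mul_assoc (a⁻¹ * b⁻¹), H]
    simp [mul_assoc]

lemma freeGroup_lift_map {α β : Type*} {M : Type*} [Group M] (q : α → β) (f : β → M)
    (w : FreeGroup α) :
    FreeGroup.lift f (FreeGroup.map q w) = FreeGroup.lift (fun a => f (q a)) w := by
  have h : (FreeGroup.lift f).comp (FreeGroup.map q) = FreeGroup.lift (fun a => f (q a)) :=
    FreeGroup.ext_hom _ _ (by simp)
  exact DFunLike.congr_fun h w

lemma lift_commWord : ∀ (k : ℕ) (f : Fin k → G), FreeGroup.lift f (commWord k) = commElt f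
  | 0, f => by simp [commWord, commElt]
  | 1, f => by simp [commWord, commElt]
  | (m + 2), f => by
    show FreeGroup.lift f (pcomm (FreeGroup.map Fin.castSucc (commWord (m + 1)))
      (FreeGroup.of (Fin.last (m + 1)))) = pcomm (commElt (fun i => f i.castSucc)) (f (Fin.last (m + 1)))
    simp only [pcomm, map_mul, map_inv, FreeGroup.lift_apply_of, freeGroup_lift_map]
    rw [lift_commWord (m + 1) (fun i => f i.castSucc)]

lemma commElt_snoc {j : ℕ} (x : Fin (j + 1) → G) (y : G) :
    commElt (Fin.snoc x y : Fin (j + 2) → G) = pcomm (commElt x) y := by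
  show pcomm (commElt (fun i => (Fin.snoc x y : Fin (j + 2) → G) i.castSucc))
      ((Fin.snoc x y : Fin (j + 2) → G) (Fin.last (j + 1))) = _
  have h1 : (fun i : Fin (j + 1) => (Fin.snoc x y : Fin (j + 2) → G) i.castSucc) = x := by
    funext i; simp
  rw [h1, Fin.snoc_last]

end Aux

section Counting

open Finset

variable {G : Type*} [Group G]

/-- Pullback to `G` of the centralizer of the image of `h` in `G ⧸ K`. -/
def ccS (K : Subgroup G) [K.Normal] (h : G) : Subgroup G :=
  Subgroup.comap (QuotientGroup.mk' K) (Subgroup.centralizer {QuotientGroup.mk' K h})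

lemma mem_ccS {K : Subgroup G} [K.Normal] {h y : G} :
    y ∈ ccS K h ↔
      (QuotientGroup.mk' K h) * (QuotientGroup.mk' K y)
        = (QuotientGroup.mk' K y) * (QuotientGroup.mk' K h) := by
  simp only [ccS, Subgroup.mem_comap, Subgroup.mem_centralizer_singleton_iff]
  exact eq_comm

lemma pcomm_mem_iff (M : Subgroup G) [M.Normal] (h y : G) :
    pcomm h y ∈ M ↔
      (QuotientGroup.mk' M h) * (QuotientGroup.mk' M y)
        = (QuotientGroup.mk' M y) * (QuotientGroup.mk' M h) := by
  rw [← QuotientGroup.eq_one_iff (pcomm h y)]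
  have h1 : (QuotientGroup.mk (pcomm h y) : G ⧸ M)
      = pcomm (QuotientGroup.mk' M h) (QuotientGroup.mk' M y) := by
    simp [pcomm]
  rw [h1, pcomm_eq_one_iff]

variable [Fintype G]

lemma index_ccS_ne_zero (K : Subgroup G) [K.Normal] (h : G) : (ccS K h).index ≠ 0 :=
  Subgroup.index_ne_zero_of_finite

/-- `1 / [G : C_{G/K}(h K)]`. -/
noncomputable def rr (K : Subgroup G) [K.Normal] (h : G) : ℝ := (((ccS K h).index : ℝ))⁻¹

lemma rr_nonneg (K : Subgroup G) [K.Normal] (h : G) : 0 ≤ rr K h := by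
  rw [rr]; positivity

lemma one_le_index_ccS (K : Subgroup G) [K.Normal] (h : G) : (1 : ℝ) ≤ ((ccS K h).index : ℝ) := by
  have := index_ccS_ne_zero K h
  exact_mod_cast Nat.one_le_iff_ne_zero.mpr this

lemma rr_le_one (K : Subgroup G) [K.Normal] (h : G) : rr K h ≤ 1 := by
  rw [rr]
  have h1 := one_le_index_ccS K h
  rw [show (1:ℝ) = (1:ℝ)⁻¹ by norm_num]
  exact inv_anti₀ (by norm_num) h1

lemma card_ccS (K : Subgroup G) [K.Normal] (h : G) :
    (Nat.card (ccS K h) : ℝ) = (Fintype.card G : ℝ) * rr K h := by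
  have h1 : Nat.card (ccS K h) * (ccS K h).index = Nat.card G := Subgroup.card_mul_index _
  rw [Nat.card_eq_fintype_card (α := G)] at h1
  have h2 : ((ccS K h).index : ℝ) ≠ 0 := Nat.cast_ne_zero.mpr (index_ccS_ne_zero K h)
  have h3 : (Nat.card (ccS K h) : ℝ) * ((ccS K h).index : ℝ) = (Fintype.card G : ℝ) := by
    exact_mod_cast h1
  rw [rr, ← div_eq_mul_inv, eq_div_iff h2]
  exact h3

lemma sum_indicator_mem (H : Subgroup G) :
    ∑ y : G, (if y ∈ H then (1 : ℝ) else 0) = (Nat.card H : ℝ) := by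
  rw [Finset.sum_boole, Nat.card_eq_fintype_card]
  congr 1
  rw [Fintype.card_subtype]

lemma sum_fiber_le (K : Subgroup G) [K.Normal] (h g : G) :
    ∑ y : G, (if pcomm h y = g then (1 : ℝ) else 0) ≤ (Fintype.card G : ℝ) * rr K h := by
  rw [← card_ccS K h, ← sum_indicator_mem (ccS K h), Finset.sum_boole, Finset.sum_boole]
  have hle : (Finset.univ.filter fun y => pcomm h y = g).card
      ≤ (Finset.univ.filter fun y : G => y ∈ ccS K h).card := by
    rcases (Finset.univ.filter fun y : G => pcomm h y = g).eq_empty_or_nonempty with he | hne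
    · simp [he]
    · obtain ⟨y₀, hy₀mem⟩ := hne
      have hy₀ : pcomm h y₀ = g := (Finset.mem_filter.mp hy₀mem).2
      have e : ∀ z : G, pcomm h z = g → z⁻¹ * h * z = h * g := by
        intro z hz; rw [← hz]; show _ = h * (h⁻¹ * z⁻¹ * h * z); group
      apply Finset.card_le_card_of_injOn (fun y => y * y₀⁻¹)
      · intro y hy
        have hy' : pcomm h y = g := (Finset.mem_filter.mp hy).2
        have key : h * (y * y₀⁻¹) = (y * y₀⁻¹) * h := by
          calc h * (y * y₀⁻¹) = y * (y⁻¹ * h * y) * y₀⁻¹ := by group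
            _ = y * (y₀⁻¹ * h * y₀) * y₀⁻¹ := by rw [e y hy', ← e y₀ hy₀]
            _ = (y * y₀⁻¹) * h := by group
        refine Finset.mem_filter.mpr ⟨Finset.mem_univ _, ?_⟩
        rw [mem_ccS, ← map_mul, ← map_mul, key]
      · intro y _ y' _ hyy
        exact mul_right_cancel hyy
  exact_mod_cast hle

lemma sum_snoc {j : ℕ} (F : (Fin (j + 1) → G) → ℝ) :
    ∑ x : Fin (j + 1) → G, F x = ∑ x : Fin j → G, ∑ y : G, F (Fin.snoc x y) := by
  rw [← Equiv.sum_comp (Equiv.mk (fun p => Fin.snoc p.1 p.2)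
    (fun f => (Fin.init f, f (Fin.last j))) (fun p => by simp) (fun f => by simp) :
      ((Fin j → G) × G) ≃ (Fin (j + 1) → G)) F, Fintype.sum_prod_type]
  rfl

end Counting

section Descent

open Finset

variable {G : Type*} [Group G]

lemma centralizer_normal {Q : Type*} [Group Q] (H : Subgroup Q) [hH : H.Normal] :
    (Subgroup.centralizer (H : Set Q)).Normal := by
  constructor
  intro x hx q
  rw [Subgroup.mem_centralizer_iff] at hx ⊢
  intro b hb
  have hb' : q⁻¹ * b * q ∈ H := by
    have := hH.conj_mem b (SetLike.mem_coe.mp hb) q⁻¹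
    simpa using this
  have hxb := hx _ (SetLike.mem_coe.mpr hb')
  calc b * (q * x * q⁻¹) = q * ((q⁻¹ * b * q) * x) * q⁻¹ := by group
    _ = q * (x * (q⁻¹ * b * q)) * q⁻¹ := by rw [hxb]
    _ = (q * x * q⁻¹) * b := by group

/-- Pullback to `G` of the centralizer of the image of `N` in `G ⧸ K`. -/
def stepK (N K : Subgroup G) [K.Normal] : Subgroup G :=
  Subgroup.comap (QuotientGroup.mk' K)
    (Subgroup.centralizer ((N.map (QuotientGroup.mk' K)) : Set (G ⧸ K)))

instance stepK_normal (N K : Subgroup G) [K.Normal] [N.Normal] : (stepK N K).Normal := by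
  haveI h1 : (N.map (QuotientGroup.mk' K)).Normal :=
    Subgroup.Normal.map ‹N.Normal› _ (QuotientGroup.mk'_surjective K)
  exact (centralizer_normal _).comap _

lemma mem_stepK {N K : Subgroup G} [K.Normal] {z : G} :
    z ∈ stepK N K ↔ ∀ a ∈ N,
      (QuotientGroup.mk' K a) * (QuotientGroup.mk' K z)
        = (QuotientGroup.mk' K z) * (QuotientGroup.mk' K a) := by
  simp only [stepK, Subgroup.mem_comap, Subgroup.mem_centralizer_iff]
  constructor
  · intro H a ha
    exact H _ (SetLike.mem_coe.mpr (Subgroup.mem_map_of_mem _ ha))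
  · rintro H b hb
    rcases Subgroup.mem_map.mp (SetLike.mem_coe.mp hb) with ⟨a, ha, rfl⟩
    exact H a ha

variable [Fintype G]

lemma rr_pcomm_le {n : ℕ} {N : Subgroup G} [N.Normal] (K : Subgroup G) [K.Normal]
    (hN : ∀ H : Subgroup G, H.index ≤ n → N ≤ H) (h y : G) :
    rr K (pcomm h y) ≤ ((n : ℝ) + 1)⁻¹
      + (if y ∈ ccS (stepK N K) h then (1 : ℝ) else 0) := by
  have hnonneg : (0:ℝ) ≤ ((n : ℝ) + 1)⁻¹ := by positivity
  by_cases hc : (ccS K (pcomm h y)).index ≤ n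
  · have h1 : N ≤ ccS K (pcomm h y) := hN _ hc
    have h2 : pcomm h y ∈ stepK N K := by
      rw [mem_stepK]
      intro a ha
      exact (mem_ccS.mp (h1 ha)).symm
    have h3 : y ∈ ccS (stepK N K) h := by
      rw [mem_ccS]
      exact (pcomm_mem_iff (stepK N K) h y).mp h2
    rw [if_pos h3]
    have := rr_le_one K (pcomm h y)
    linarith
  · push_neg at hc
    have h4 : ((n : ℝ) + 1) ≤ ((ccS K (pcomm h y)).index : ℝ) := by exact_mod_cast hc
    have h5 : rr K (pcomm h y) ≤ ((n : ℝ) + 1)⁻¹ := by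
      rw [rr]
      exact inv_anti₀ (by positivity) h4
    have h6 : (0:ℝ) ≤ (if y ∈ ccS (stepK N K) h then (1 : ℝ) else 0) := by positivity
    linarith

lemma descent_step {n : ℕ} {N : Subgroup G} [N.Normal]
    (hN : ∀ H : Subgroup G, H.index ≤ n → N ≤ H)
    {j : ℕ} (K : Subgroup G) [K.Normal] {δ : ℝ}
    (hsum : δ * (Fintype.card G : ℝ) ^ (j + 2) ≤ ∑ x : Fin (j + 2) → G, rr K (commElt x)) :
    (δ - ((n : ℝ) + 1)⁻¹) * (Fintype.card G : ℝ) ^ (j + 1)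
      ≤ ∑ x : Fin (j + 1) → G, rr (stepK N K) (commElt x) := by
  set C := (Fintype.card G : ℝ) with hC
  have hG : (0:ℝ) < C := by rw [hC]; exact_mod_cast Fintype.card_pos
  have e1 : ∑ x : Fin (j + 2) → G, rr K (commElt x)
      = ∑ x : Fin (j + 1) → G, ∑ y : G, rr K (pcomm (commElt x) y) := by
    rw [sum_snoc (fun x => rr K (commElt x))]
    exact Finset.sum_congr rfl fun x _ => Finset.sum_congr rfl fun y _ => by
      rw [commElt_snoc]
  have e2 : ∀ x : Fin (j + 1) → G, ∑ y : G, rr K (pcomm (commElt x) y)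
      ≤ C * ((n : ℝ) + 1)⁻¹ + C * rr (stepK N K) (commElt x) := by
    intro x
    have hle : ∑ y : G, rr K (pcomm (commElt x) y)
        ≤ ∑ y : G, (((n : ℝ) + 1)⁻¹ + if y ∈ ccS (stepK N K) (commElt x) then (1:ℝ) else 0) :=
      Finset.sum_le_sum fun y _ => rr_pcomm_le K hN (commElt x) y
    rw [Finset.sum_add_distrib, Finset.sum_const, sum_indicator_mem, card_ccS] at hle
    simpa [nsmul_eq_mul, mul_comm] using hle
  have e3 : ∑ x : Fin (j + 1) → G, (C * ((n : ℝ) + 1)⁻¹ + C * rr (stepK N K) (commElt x))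
      = C ^ (j + 1) * (C * ((n : ℝ) + 1)⁻¹)
        + C * ∑ x : Fin (j + 1) → G, rr (stepK N K) (commElt x) := by
    rw [Finset.sum_add_distrib, Finset.sum_const, Finset.mul_sum, Finset.card_univ,
      Fintype.card_fun, Fintype.card_fin, nsmul_eq_mul]
    push_cast
    ring
  set S' := ∑ x : Fin (j + 1) → G, rr (stepK N K) (commElt x) with hS'
  have big : δ * C ^ (j + 2) ≤ C ^ (j + 1) * (C * ((n : ℝ) + 1)⁻¹) + C * S' := by
    calc δ * C ^ (j + 2) ≤ ∑ x : Fin (j + 2) → G, rr K (commElt x) := hsum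
      _ = ∑ x : Fin (j + 1) → G, ∑ y : G, rr K (pcomm (commElt x) y) := e1
      _ ≤ ∑ x : Fin (j + 1) → G, (C * ((n : ℝ) + 1)⁻¹ + C * rr (stepK N K) (commElt x)) :=
          Finset.sum_le_sum fun x _ => e2 x
      _ = _ := e3
  have hpow : C ^ (j + 2) = C ^ (j + 1) * C := pow_succ C (j + 1)
  have h5 : ((δ - ((n : ℝ) + 1)⁻¹) * C ^ (j + 1)) * C ≤ S' * C := by
    calc ((δ - ((n : ℝ) + 1)⁻¹) * C ^ (j + 1)) * C
        = δ * (C ^ (j + 1) * C) - C ^ (j + 1) * (C * ((n : ℝ) + 1)⁻¹) := by ring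
      _ = δ * C ^ (j + 2) - C ^ (j + 1) * (C * ((n : ℝ) + 1)⁻¹) := by rw [← hpow]
      _ ≤ C * S' := by linarith
      _ = S' * C := by ring
  exact le_of_mul_le_mul_right h5 hG

end Descent

section BaseFinal

open Finset

variable {G : Type*} [Group G] [Fintype G]

lemma base_step {m : ℕ} {ε : ℝ} (g : G) (hg : ε ≤ wordProb (commWord (m + 2)) g) :
    ε * (Fintype.card G : ℝ) ^ (m + 1)
      ≤ ∑ x : Fin (m + 1) → G, rr (⊥ : Subgroup G) (commElt x) := by
  set C := (Fintype.card G : ℝ) with hC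
  have hG : (0:ℝ) < C := by rw [hC]; exact_mod_cast Fintype.card_pos
  have hcard : (Nat.card {f : Fin (m + 2) → G // FreeGroup.lift f (commWord (m + 2)) = g} : ℝ)
      = ∑ x : Fin (m + 2) → G, (if commElt x = g then (1:ℝ) else 0) := by
    rw [Finset.sum_boole, Nat.card_eq_fintype_card]
    congr 1
    rw [Fintype.card_congr (Equiv.subtypeEquivRight (fun f => by rw [lift_commWord]))]
    rw [Fintype.card_subtype]
  have h1 : ε * C ^ (m + 2) ≤ ∑ x : Fin (m + 2) → G, (if commElt x = g then (1:ℝ) else 0) := by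
    rw [← hcard]
    have h2 := hg
    rw [wordProb, Nat.card_eq_fintype_card (α := G)] at h2
    have h3 : (0:ℝ) < C ^ (m + 2) := by positivity
    calc ε * C ^ (m + 2)
        ≤ ((Nat.card {f : Fin (m + 2) → G // FreeGroup.lift f (commWord (m + 2)) = g} : ℝ)
            / C ^ (m + 2)) * C ^ (m + 2) := by
          apply mul_le_mul_of_nonneg_right h2 (le_of_lt h3)
      _ = _ := div_mul_cancel₀ _ (ne_of_gt h3)
  have h4 : ∑ x : Fin (m + 2) → G, (if commElt x = g then (1:ℝ) else 0)
      = ∑ x : Fin (m + 1) → G, ∑ y : G, (if pcomm (commElt x) y = g then (1:ℝ) else 0) := by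
    rw [sum_snoc (fun x => if commElt x = g then (1:ℝ) else 0)]
    exact Finset.sum_congr rfl fun x _ => Finset.sum_congr rfl fun y _ => by rw [commElt_snoc]
  have h5 : ∑ x : Fin (m + 1) → G, ∑ y : G, (if pcomm (commElt x) y = g then (1:ℝ) else 0)
      ≤ ∑ x : Fin (m + 1) → G, C * rr (⊥ : Subgroup G) (commElt x) :=
    Finset.sum_le_sum fun x _ => sum_fiber_le ⊥ (commElt x) g
  have h6 : ε * C ^ (m + 2) ≤ C * ∑ x : Fin (m + 1) → G, rr (⊥ : Subgroup G) (commElt x) := by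
    rw [Finset.mul_sum]
    calc ε * C ^ (m + 2) ≤ _ := h1
      _ = _ := h4
      _ ≤ _ := h5
  have hpow : C ^ (m + 2) = C * C ^ (m + 1) := by ring
  rw [hpow] at h6
  have h7 : C * (ε * C ^ (m + 1)) ≤ C * ∑ x : Fin (m + 1) → G, rr (⊥ : Subgroup G) (commElt x) := by
    calc C * (ε * C ^ (m + 1)) = ε * (C * C ^ (m + 1)) := by ring
      _ ≤ _ := h6
  exact le_of_mul_le_mul_left h7 hG

lemma final_step {n : ℕ} {N : Subgroup G} [N.Normal]
    (hN : ∀ H : Subgroup G, H.index ≤ n → N ≤ H)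
    (K : Subgroup G) [K.Normal] {δ : ℝ}
    (hδ : ((n : ℝ) + 1)⁻¹ + ((n : ℝ) + 1)⁻¹ < δ)
    (hsum : δ * (Fintype.card G : ℝ) ≤ ∑ y : G, rr K y) :
    ∀ a ∈ N, ∀ b ∈ N, ⁅a, b⁆ ∈ K := by
  set C := (Fintype.card G : ℝ) with hC
  have hG : (0:ℝ) < C := by rw [hC]; exact_mod_cast Fintype.card_pos
  have hn1 : (0:ℝ) < (n : ℝ) + 1 := by positivity
  set T : Finset G := Finset.univ.filter (fun y => (ccS K y).index ≤ n) with hT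
  have hTcard : C * ((n : ℝ) + 1)⁻¹ < (T.card : ℝ) := by
    have h1 : ∑ y : G, rr K y
        ≤ ∑ y : G, (((n : ℝ) + 1)⁻¹ + if (ccS K y).index ≤ n then (1:ℝ) else 0) := by
      apply Finset.sum_le_sum
      intro y _
      by_cases hc : (ccS K y).index ≤ n
      · rw [if_pos hc]
        have := rr_le_one K y
        have h0 : (0:ℝ) ≤ ((n : ℝ) + 1)⁻¹ := by positivity
        linarith
      · rw [if_neg hc]
        push_neg at hc
        have h4 : ((n : ℝ) + 1) ≤ ((ccS K y).index : ℝ) := by exact_mod_cast hc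
        have : rr K y ≤ ((n : ℝ) + 1)⁻¹ := by
          rw [rr]; exact inv_anti₀ hn1 h4
        linarith
    rw [Finset.sum_add_distrib, Finset.sum_const, Finset.sum_boole, Finset.card_univ,
      nsmul_eq_mul] at h1
    have h2 : δ * C ≤ C * ((n : ℝ) + 1)⁻¹ + (T.card : ℝ) := by
      calc δ * C ≤ ∑ y : G, rr K y := hsum
        _ ≤ _ := h1
        _ = C * ((n : ℝ) + 1)⁻¹ + (T.card : ℝ) := by rw [hC, hT]
    have h3 : (((n : ℝ) + 1)⁻¹ + ((n : ℝ) + 1)⁻¹) * C < δ * C :=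
      mul_lt_mul_of_pos_right hδ hG
    nlinarith
  intro a ha b hb
  have hTsub : ∀ y ∈ T, y ∈ ccS K a := by
    intro y hy
    have hy' : (ccS K y).index ≤ n := (Finset.mem_filter.mp hy).2
    have h1 : a ∈ ccS K y := hN _ hy' ha
    rw [mem_ccS] at h1 ⊢
    exact h1.symm
  have hcardle : (T.card : ℝ) ≤ (Nat.card (ccS K a) : ℝ) := by
    have h1 : T ⊆ Finset.univ.filter (fun y : G => y ∈ ccS K a) := by
      intro y hy
      exact Finset.mem_filter.mpr ⟨Finset.mem_univ _, hTsub y hy⟩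
    have h2 := Finset.card_le_card h1
    have h3 : (Finset.univ.filter (fun y : G => y ∈ ccS K a)).card = Nat.card (ccS K a) := by
      rw [Nat.card_eq_fintype_card, Fintype.card_subtype]
    exact_mod_cast h3 ▸ h2
  have hidx : (ccS K a).index ≤ n := by
    by_contra hcon
    push_neg at hcon
    have h4 : ((n : ℝ) + 1) ≤ ((ccS K a).index : ℝ) := by exact_mod_cast hcon
    have h6 : Nat.card (ccS K a) * (ccS K a).index = Fintype.card G := by
      rw [← Nat.card_eq_fintype_card]; exact Subgroup.card_mul_index _
    have h7 : (Nat.card (ccS K a) : ℝ) * ((ccS K a).index : ℝ) = C := by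
      rw [hC]; exact_mod_cast h6
    have h8 : ((n : ℝ) + 1) * ((n : ℝ) + 1)⁻¹ = 1 := mul_inv_cancel₀ (ne_of_gt hn1)
    have h9 : C < (Nat.card (ccS K a) : ℝ) * ((n : ℝ) + 1) := by
      calc C = (C * ((n : ℝ) + 1)⁻¹) * ((n : ℝ) + 1) := by
            rw [mul_assoc, inv_mul_cancel₀ (ne_of_gt hn1), mul_one]
        _ < (T.card : ℝ) * ((n : ℝ) + 1) := mul_lt_mul_of_pos_right hTcard hn1
        _ ≤ _ := mul_le_mul_of_nonneg_right hcardle (le_of_lt hn1)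
    have h10 : (Nat.card (ccS K a) : ℝ) * ((n : ℝ) + 1) ≤ C := by
      rw [← h7]
      exact mul_le_mul_of_nonneg_left h4 (by positivity)
    linarith
  have hb' : b ∈ ccS K a := hN _ hidx hb
  rw [mem_ccS] at hb'
  have hcomm : QuotientGroup.mk' K ⁅a, b⁆ = 1 := by
    rw [map_commutatorElement]
    exact commutatorElement_eq_one_iff_commute.mpr hb'
  rwa [← MonoidHom.mem_ker, QuotientGroup.ker_mk'] at hcomm

end BaseFinal

section KerInt

variable {G : Type*} [Group G] [Finite G]

lemma kerIntPerm_le (n : ℕ) (H : Subgroup G) (hH : H.index ≤ n) :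
    (⨅ φ : G →* Equiv.Perm (Fin n), φ.ker) ≤ H := by
  haveI : Fintype (G ⧸ H) := Fintype.ofFinite _
  have hcard : Fintype.card (G ⧸ H) ≤ Fintype.card (Fin n) := by
    rw [Fintype.card_fin, ← Nat.card_eq_fintype_card, ← Subgroup.index_eq_card]
    exact hH
  obtain ⟨e⟩ := Function.Embedding.nonempty_of_card_le hcard
  have h1 : (⨅ φ : G →* Equiv.Perm (Fin n), φ.ker)
      ≤ ((Equiv.Perm.viaEmbeddingHom e).comp (MulAction.toPermHom G (G ⧸ H))).ker :=
    iInf_le _ _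
  refine h1.trans ?_
  intro x hx
  rw [MonoidHom.mem_ker, MonoidHom.comp_apply] at hx
  have h2 : MulAction.toPermHom G (G ⧸ H) x = 1 := by
    apply Equiv.Perm.viaEmbeddingHom_injective e
    rw [hx, map_one]
  have h3 : x ∈ H.normalCore := by
    rw [Subgroup.normalCore_eq_ker, MonoidHom.mem_ker]
    exact h2
  exact H.normalCore_le h3

lemma kerIntPerm_normal (n : ℕ) : (⨅ φ : G →* Equiv.Perm (Fin n), φ.ker).Normal := by
  constructor
  intro x hx gg
  rw [Subgroup.mem_iInf] at hx ⊢
  intro φ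
  exact (MonoidHom.normal_ker φ).conj_mem x (hx φ) gg

lemma kerIntPerm_index_le (n d : ℕ) (S : Finset G) (hSd : S.card ≤ d)
    (hSgen : Subgroup.closure (S : Set G) = ⊤) :
    (⨅ φ : G →* Equiv.Perm (Fin n), φ.ker).index ≤ n.factorial ^ n.factorial ^ d := by
  haveI : Finite (G →* Equiv.Perm (Fin n)) :=
    Finite.of_injective (fun φ => (φ : G → Equiv.Perm (Fin n))) DFunLike.coe_injective
  haveI : Fintype (G →* Equiv.Perm (Fin n)) := Fintype.ofFinite _
  have hidx2 : ∀ φ : G →* Equiv.Perm (Fin n), φ.ker.index ≤ n.factorial := by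
    intro φ
    rw [Subgroup.index_ker]
    calc Nat.card φ.range ≤ Nat.card (Equiv.Perm (Fin n)) := Subgroup.card_le_card_group _
      _ = n.factorial := by rw [Nat.card_eq_fintype_card, Fintype.card_perm, Fintype.card_fin]
  have hidx3 : (⨅ φ : G →* Equiv.Perm (Fin n), φ.ker).index
      ≤ n.factorial ^ Fintype.card (G →* Equiv.Perm (Fin n)) := by
    calc (⨅ φ : G →* Equiv.Perm (Fin n), φ.ker).index
        ≤ ∏ φ : G →* Equiv.Perm (Fin n), φ.ker.index := Subgroup.index_iInf_le _
      _ ≤ ∏ _φ : G →* Equiv.Perm (Fin n), n.factorial :=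
          Finset.prod_le_prod' fun φ _ => hidx2 φ
      _ = n.factorial ^ Fintype.card (G →* Equiv.Perm (Fin n)) := by
          rw [Finset.prod_const, Finset.card_univ]
  have hhom : Fintype.card (G →* Equiv.Perm (Fin n)) ≤ n.factorial ^ d := by
    have hinj : Function.Injective
        (fun (φ : G →* Equiv.Perm (Fin n)) => (fun s : {x // x ∈ S} => φ s.1)) := by
      intro φ ψ hfψ
      apply MonoidHom.eq_of_eqOn_dense hSgen
      intro x hx
      exact congrFun hfψ ⟨x, hx⟩
    calc Fintype.card (G →* Equiv.Perm (Fin n))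
        ≤ Fintype.card ({x // x ∈ S} → Equiv.Perm (Fin n)) :=
          Fintype.card_le_of_injective _ hinj
      _ = n.factorial ^ S.card := by
          rw [Fintype.card_fun, Fintype.card_perm, Fintype.card_fin, Fintype.card_coe]
      _ ≤ n.factorial ^ d := Nat.pow_le_pow_right n.factorial_pos hSd
  exact hidx3.trans (Nat.pow_le_pow_right n.factorial_pos hhom)

end KerInt

theorem stmt1' (k d : ℕ) (hk : 1 ≤ k) (hd : 1 ≤ d) (ε : ℝ) (hε : 0 < ε)
    (G : Type*) [Group G] [Finite G]
    (hgen : ∃ S : Finset G, S.card ≤ d ∧ Subgroup.closure (S : Set G) = ⊤)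
    (g : G) (h : ε ≤ wordProb (commWord k) g) :
    ∃ N : Subgroup G, N.Normal ∧ (⊤ : Subgroup ↥N).lowerCentralSeries (k - 1) = ⊥ ∧
      N.index ≤ (Nat.floor ((k : ℝ) / ε)).factorial ^
        ((Nat.floor ((k : ℝ) / ε)).factorial ^ d) := by
  classical
  by_cases hk1 : k = 1
  · subst hk1
    refine ⟨⊥, inferInstance, ?_, ?_⟩
    · show (⊤ : Subgroup ↥(⊥ : Subgroup G)).lowerCentralSeries 0 = ⊥
      rw [Subgroup.lowerCentralSeries_zero, eq_bot_iff]
      intro x _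
      have hx : (x : G) ∈ (⊥ : Subgroup G) := x.2
      rw [Subgroup.mem_bot] at hx
      rw [Subgroup.mem_bot]
      exact Subtype.ext hx
    · rw [Subgroup.index_bot]
      have hsingle : Nat.card {f : Fin 1 → G // FreeGroup.lift f (commWord 1) = g} = 1 := by
        rw [Nat.card_eq_one_iff_unique]
        constructor
        · constructor
          intro x y
          apply Subtype.ext
          funext i
          have hx : FreeGroup.lift x.1 (commWord 1) = g := x.2
          have hy : FreeGroup.lift y.1 (commWord 1) = g := y.2
          rw [lift_commWord] at hx hy
          have hi : i = 0 := Subsingleton.elim i 0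
          rw [hi]
          calc x.1 0 = commElt x.1 := rfl
            _ = g := hx
            _ = commElt y.1 := hy.symm
            _ = y.1 0 := rfl
        · exact ⟨⟨fun _ => g, by rw [lift_commWord]; rfl⟩⟩
      have h0 : (0:ℝ) < (Nat.card G : ℝ) := by
        haveI : Fintype G := Fintype.ofFinite G
        rw [Nat.card_eq_fintype_card]
        exact_mod_cast Fintype.card_pos
      have hcardG : (Nat.card G : ℝ) ≤ 1 / ε := by
        have h2 := h
        rw [wordProb, hsingle, pow_one, Nat.cast_one, le_div_iff₀ h0] at h2
        rw [le_div_iff₀ hε]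
        linarith
      have hfloor : Nat.card G ≤ Nat.floor ((1:ℝ) / ε) := Nat.le_floor hcardG
      have hcast : (((1:ℕ)) : ℝ) = (1:ℝ) := Nat.cast_one
      rw [hcast]
      set q := Nat.floor ((1:ℝ) / ε)
      calc Nat.card G ≤ q := hfloor
        _ ≤ q.factorial := Nat.self_le_factorial q
        _ ≤ q.factorial ^ q.factorial ^ d :=
            Nat.le_self_pow (Nat.pos_iff_ne_zero.mp (pow_pos q.factorial_pos d)) _
  · obtain ⟨m, rfl⟩ : ∃ m, k = m + 2 := ⟨k - 2, by omega⟩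
    haveI : Fintype G := Fintype.ofFinite G
    set n := Nat.floor (((m + 2 : ℕ) : ℝ) / ε) with hn
    set N := ⨅ φ : G →* Equiv.Perm (Fin n), φ.ker with hNdef
    haveI hNn : N.Normal := kerIntPerm_normal n
    have hKP : ∀ H : Subgroup G, H.index ≤ n → N ≤ H := fun H hH => kerIntPerm_le n H hH
    obtain ⟨S, hSd, hSgen⟩ := hgen
    refine ⟨N, hNn, ?_, kerIntPerm_index_le n d S hSd hSgen⟩
    have hn1 : (0:ℝ) < (n : ℝ) + 1 := by positivity
    have h1 : ((m + 2 : ℕ) : ℝ) / ε < (n : ℝ) + 1 := by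
      have := Nat.lt_floor_add_one (((m + 2 : ℕ) : ℝ) / ε)
      rw [← hn] at this
      exact this
    have hflt : ((m : ℝ) + 2) < ε * ((n : ℝ) + 1) := by
      have h2 : ((m + 2 : ℕ) : ℝ) = (m : ℝ) + 2 := by push_cast; ring
      rw [h2] at h1
      calc (m : ℝ) + 2 = (((m : ℝ) + 2) / ε) * ε := by field_simp
        _ < ((n : ℝ) + 1) * ε := mul_lt_mul_of_pos_right h1 hε
        _ = ε * ((n : ℝ) + 1) := by ring
    have hchain : ∀ i : ℕ, i ≤ m → ∃ K : Subgroup G, ∃ _hKn : K.Normal,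
        ((fun M : Subgroup G => ⁅M, N⁆)^[i] K = ⊥) ∧
        ((ε - (i : ℝ) * ((n : ℝ) + 1)⁻¹) * (Fintype.card G : ℝ) ^ (m - i + 1)
          ≤ ∑ x : Fin (m - i + 1) → G, rr K (commElt x)) := by
      intro i
      induction i with
      | zero =>
        intro _
        refine ⟨⊥, inferInstance, rfl, ?_⟩
        simpa using base_step g h
      | succ i ih =>
        intro hi
        obtain ⟨K, hKn, hCP, hS⟩ := ih (by omega)
        haveI := hKn
        have hlevel : m - i + 1 = (m - (i + 1) + 1) + 1 := by omega
        rw [hlevel] at hS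
        have hstep := descent_step hKP (j := m - (i + 1)) K hS
        refine ⟨stepK N K, stepK_normal N K, ?_, ?_⟩
        · rw [Function.iterate_succ_apply]
          have h3 : ⁅stepK N K, N⁆ ≤ K := by
            rw [Subgroup.commutator_le]
            intro z hz a ha
            have hcz := mem_stepK.mp hz a ha
            have hcomm : QuotientGroup.mk' K ⁅z, a⁆ = 1 := by
              rw [map_commutatorElement]
              exact commutatorElement_eq_one_iff_commute.mpr hcz.symm
            rwa [← MonoidHom.mem_ker, QuotientGroup.ker_mk'] at hcomm
          have hmono : Monotone (fun M : Subgroup G => ⁅M, N⁆) :=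
            fun A B hAB => Subgroup.commutator_mono hAB le_rfl
          have h4 : (fun M : Subgroup G => ⁅M, N⁆)^[i]
              ((fun M : Subgroup G => ⁅M, N⁆) (stepK N K))
              ≤ (fun M : Subgroup G => ⁅M, N⁆)^[i] K := hmono.iterate i h3
          rw [hCP] at h4
          exact le_bot_iff.mp h4
        · have harith : ε - ((i : ℝ) + 1) * ((n : ℝ) + 1)⁻¹
              = (ε - (i : ℝ) * ((n : ℝ) + 1)⁻¹) - ((n : ℝ) + 1)⁻¹ := by ring
          push_cast
          rw [harith]
          exact hstep
    obtain ⟨K, hKn, hCP, hS⟩ := hchain m le_rfl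
    haveI := hKn
    have hone : m - m + 1 = 1 := by omega
    rw [hone] at hS
    rw [pow_one] at hS
    have hsum1 : ∑ x : Fin 1 → G, rr K (commElt x) = ∑ y : G, rr K y :=
      Fintype.sum_equiv (Equiv.funUnique (Fin 1) G) _ _ (fun x => rfl)
    rw [hsum1] at hS
    have hδf : ((n : ℝ) + 1)⁻¹ + ((n : ℝ) + 1)⁻¹ < ε - (m : ℝ) * ((n : ℝ) + 1)⁻¹ := by
      have hinv : (0:ℝ) < ((n : ℝ) + 1)⁻¹ := by positivity
      have h9 : ((m : ℝ) + 2) * ((n : ℝ) + 1)⁻¹ < ε := by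
        calc ((m : ℝ) + 2) * ((n : ℝ) + 1)⁻¹ < (ε * ((n : ℝ) + 1)) * ((n : ℝ) + 1)⁻¹ :=
            mul_lt_mul_of_pos_right hflt hinv
          _ = ε := by field_simp
      nlinarith
    have hcommN : ∀ a ∈ N, ∀ b ∈ N, ⁅a, b⁆ ∈ K := final_step hKP K hδf hS
    have key : ∀ j : ℕ, Subgroup.map N.subtype ((⊤ : Subgroup ↥N).lowerCentralSeries j)
        ≤ (fun M : Subgroup G => ⁅M, N⁆)^[j] N := by
      intro j
      induction j with
      | zero =>
        rw [Subgroup.lowerCentralSeries_zero, Function.iterate_zero_apply]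
        rw [← MonoidHom.range_eq_map, Subgroup.range_subtype]
      | succ j ih =>
        have hstep : (⊤ : Subgroup ↥N).lowerCentralSeries (j + 1)
            = ⁅(⊤ : Subgroup ↥N).lowerCentralSeries j, (⊤ : Subgroup ↥N)⁆ := rfl
        rw [hstep, Subgroup.map_commutator, Function.iterate_succ_apply']
        have hmap : Subgroup.map N.subtype ⊤ = N := by
          rw [← MonoidHom.range_eq_map, Subgroup.range_subtype]
        exact Subgroup.commutator_mono ih (le_of_eq hmap)
    have h2 : (fun M : Subgroup G => ⁅M, N⁆)^[m + 1] N ≤ ⊥ := by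
      rw [Function.iterate_succ_apply]
      have hmono : Monotone (fun M : Subgroup G => ⁅M, N⁆) :=
        fun A B hAB => Subgroup.commutator_mono hAB le_rfl
      have h3 : (fun M : Subgroup G => ⁅M, N⁆) N ≤ K := Subgroup.commutator_le.mpr hcommN
      calc (fun M : Subgroup G => ⁅M, N⁆)^[m] ((fun M : Subgroup G => ⁅M, N⁆) N)
          ≤ (fun M : Subgroup G => ⁅M, N⁆)^[m] K := hmono.iterate m h3
        _ = ⊥ := hCP
    have h4 : Subgroup.map N.subtype ((⊤ : Subgroup ↥N).lowerCentralSeries (m + 1)) = ⊥ :=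
      le_bot_iff.mp ((key (m + 1)).trans h2)
    have h5 : (⊤ : Subgroup ↥N).lowerCentralSeries (m + 1) = ⊥ := by
      apply Subgroup.map_injective N.subtype_injective
      rw [h4, Subgroup.map_bot]
    exact h5


/-- If a `d`-generated finite group `G` satisfies `P_{G,w_k}(g) ≥ ε`
for some `g ∈ G`, then `G` has a normal subgroup `N`, nilpotent of class less
than `k`, with `|G/N| ≤ n!^{n!^d}` where `n = ⌊k/ε⌋`. -/
theorem stmt1 (k d : ℕ) (hk : 1 ≤ k) (hd : 1 ≤ d) (ε : ℝ) (hε : 0 < ε)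
    (G : Type*) [Group G] [Finite G]
    (hgen : ∃ S : Finset G, S.card ≤ d ∧ Subgroup.closure (S : Set G) = ⊤)
    (g : G) (h : ε ≤ wordProb (commWord k) g) :
    ∃ N : Subgroup G, N.Normal ∧ (⊤ : Subgroup ↥N).lowerCentralSeries (k - 1) = ⊥ ∧
      N.index ≤ (Nat.floor ((k : ℝ) / ε)).factorial ^
        ((Nat.floor ((k : ℝ) / ε)).factorial ^ d) := by
  exact stmt1' k d hk hd ε hε G hgen g h
end

section
/- Fix a positive integer k and a real number ε > 0. Let w = [x_1^2, x_2, …, x_k]. There exists a positive integer n = n(k, ε), depending only on k and ε, such that for every finite group G satisfying P_{G,w}(g) ≥ ε for some g ∈ G, the subgroup G(S_n) (the intersection of the kernels of all homomorphisms from G to the symmetric group S_n) is nilpotent of class at most k, i.e., γ_{k+1}(G(S_n)) = 1. -/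
open scoped Classical

section Infra

variable {G : Type*} [Group G]

lemma kerInt_le_ker {H : Type*} [Group H] (φ : G →* H) : kerInt G H ≤ φ.ker :=
  iInf_le _ φ

lemma kerInt_normal_s10 (H : Type*) [Group H] : (kerInt G H).Normal := by
  constructor
  intro x hx γ
  simp only [kerInt, Subgroup.mem_iInf, MonoidHom.mem_ker] at hx ⊢
  intro φ
  simp [map_mul, hx φ]

lemma centralizer_normal_of_normal (K : Subgroup G) (hK : K.Normal) :
    (Subgroup.centralizer (K : Set G)).Normal := by
  constructor
  intro c hc γ
  rw [Subgroup.mem_centralizer_iff] at hc ⊢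
  intro h hh
  have hh' : γ⁻¹ * h * γ ∈ K := by simpa using hK.conj_mem h hh γ⁻¹
  have e := hc _ hh'
  calc h * (γ * c * γ⁻¹) = γ * ((γ⁻¹ * h * γ) * c) * γ⁻¹ := by group
    _ = γ * (c * (γ⁻¹ * h * γ)) * γ⁻¹ := by rw [e]
    _ = (γ * c * γ⁻¹) * h := by group

noncomputable def permCastHom {m n : ℕ} (h : m ≤ n) :
    Equiv.Perm (Fin m) →* Equiv.Perm (Fin n) :=
  Equiv.Perm.viaEmbeddingHom (Fin.castLEEmb h)

lemma permCastHom_injective {m n : ℕ} (h : m ≤ n) : Function.Injective (permCastHom h) :=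
  Equiv.Perm.viaEmbeddingHom_injective _

lemma kerInt_le_of_index_le [Finite G] {H : Subgroup G} {n : ℕ} (hn : H.index ≤ n) :
    kerInt G (Equiv.Perm (Fin n)) ≤ H := by
  classical
  have : Fintype (G ⧸ H) := Fintype.ofFinite _
  have hcard : Fintype.card (G ⧸ H) ≤ n := by
    rwa [← Nat.card_eq_fintype_card, ← Subgroup.index_eq_card]
  set e : (G ⧸ H) ↪ Fin n :=
    (Fintype.equivFin (G ⧸ H)).toEmbedding.trans (Fin.castLEEmb hcard) with he
  intro x hx
  have hker := kerInt_le_ker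
    ((Equiv.Perm.viaEmbeddingHom e).comp (MulAction.toPermHom G (G ⧸ H))) hx
  rw [MonoidHom.mem_ker, MonoidHom.comp_apply] at hker
  have h1 : MulAction.toPermHom G (G ⧸ H) x = 1 :=
    Equiv.Perm.viaEmbeddingHom_injective e (by rw [hker, map_one])
  have h2 : x • ((1 : G) : G ⧸ H) = ((1 : G) : G ⧸ H) := by
    have := congrArg (fun (p : Equiv.Perm (G ⧸ H)) => p ((1 : G) : G ⧸ H)) h1
    simpa using this
  have h3 : ((x : G) : G ⧸ H) = ((1 : G) : G ⧸ H) := by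
    have : x • ((1 : G) : G ⧸ H) = ((x * 1 : G) : G ⧸ H) := rfl
    rw [this] at h2
    simpa using h2
  have h4 : x⁻¹ * 1 ∈ H := QuotientGroup.eq.mp h3
  simpa using h4

lemma kerInt_map_mem {Q : Type*} [Group Q] (π : G →* Q) {m n : ℕ} (hmn : m ≤ n)
    {x : G} (hx : x ∈ kerInt G (Equiv.Perm (Fin n))) :
    π x ∈ kerInt Q (Equiv.Perm (Fin m)) := by
  rw [kerInt, Subgroup.mem_iInf]
  intro ψ
  rw [MonoidHom.mem_ker]
  apply permCastHom_injective hmn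
  have := kerInt_le_ker ((permCastHom hmn).comp (ψ.comp π)) hx
  rw [MonoidHom.mem_ker] at this
  simpa using this

lemma index_le_of_card_ge [Finite G] {H : Subgroup G} {n : ℕ} {δ : ℝ} (hδ : 0 < δ)
    (hcard : δ * (Nat.card G : ℝ) ≤ (Nat.card H : ℝ)) (hn : 1 / δ ≤ (n : ℝ)) :
    H.index ≤ n := by
  have hG : (0 : ℝ) < (Nat.card G : ℝ) := by exact_mod_cast Nat.card_pos
  have hmulN := Subgroup.card_mul_index H
  have hmul : (Nat.card H : ℝ) * (H.index : ℝ) = (Nat.card G : ℝ) := by exact_mod_cast hmulN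
  have h2 : (H.index : ℝ) * (δ * (Nat.card G : ℝ)) ≤ (H.index : ℝ) * (Nat.card H : ℝ) :=
    mul_le_mul_of_nonneg_left hcard (by positivity)
  rw [mul_comm (H.index : ℝ) (Nat.card H : ℝ)] at h2
  rw [hmul] at h2
  have h3 : (H.index : ℝ) * δ ≤ 1 := by nlinarith
  have h4 : (H.index : ℝ) ≤ 1 / δ := by rw [le_div_iff₀ hδ]; exact h3
  have : (H.index : ℝ) ≤ (n : ℝ) := le_trans h4 hn
  exact_mod_cast this

lemma lift_freeGroup_map {α β : Type*} (gm : α → β) (f : β → G) (w : FreeGroup α) :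
    FreeGroup.lift f (FreeGroup.map gm w) = FreeGroup.lift (f ∘ gm) w := by
  have h : (FreeGroup.lift f).comp (FreeGroup.map gm) = FreeGroup.lift (f ∘ gm) :=
    FreeGroup.ext_hom _ _ (by simp)
  exact DFunLike.congr_fun h w

lemma monoidHom_lift {H : Type*} [Group H] (π : G →* H) {α : Type*} (f : α → G) (w : FreeGroup α) :
    π (FreeGroup.lift f w) = FreeGroup.lift (fun a => π (f a)) w := by
  have h : π.comp (FreeGroup.lift f) = FreeGroup.lift (fun a => π (f a)) :=
    FreeGroup.ext_hom _ _ (by simp)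
  exact DFunLike.congr_fun h w

lemma lift_sqCommWord_one (f : Fin 1 → G) :
    FreeGroup.lift f (sqCommWord 1) = f 0 * f 0 := by
  show FreeGroup.lift f (FreeGroup.of 0 ^ 2) = _
  rw [map_pow, FreeGroup.lift_apply_of, sq]

lemma lift_sqCommWord_succ {k : ℕ} (hk : 1 ≤ k) (f : Fin (k + 1) → G) :
    FreeGroup.lift f (sqCommWord (k + 1)) =
      pcomm (FreeGroup.lift (f ∘ Fin.castSucc) (sqCommWord k)) (f (Fin.last k)) := by
  obtain ⟨m, rfl⟩ : ∃ m, k = m + 1 := ⟨k - 1, by omega⟩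
  show FreeGroup.lift f
      (pcomm (FreeGroup.map Fin.castSucc (sqCommWord (m + 1))) (FreeGroup.of (Fin.last (m + 1)))) = _
  simp only [pcomm, map_mul, map_inv, FreeGroup.lift_apply_of, lift_freeGroup_map]

lemma card_eq_sum_card_fiber {α β : Type*} [Fintype α] [Fintype β] (f : α → β) :
    Fintype.card α = ∑ b : β, Fintype.card {a : α // f a = b} := by
  classical
  rw [← Fintype.card_sigma]
  exact Fintype.card_congr (Equiv.sigmaFiberEquiv f).symm

lemma exists_dense_large (ι : Type*) [Fintype ι] (c cc : ι → ℕ) (D θ S : ℝ)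
    (hθ : 0 ≤ θ) (hD : ∀ i, (c i : ℝ) ≤ D) (hcc : ∀ i, c i ≤ cc i)
    (hS : S ≤ ∑ i, (c i : ℝ)) :
    S ≤ ((Finset.univ.filter (fun i => θ ≤ (cc i : ℝ))).card : ℝ) * D
      + (Fintype.card ι : ℝ) * θ := by
  classical
  have hsplit := Finset.sum_filter_add_sum_filter_not Finset.univ
    (fun i => θ ≤ (cc i : ℝ)) (fun i => (c i : ℝ))
  have h1 : ∑ i ∈ Finset.univ.filter (fun i => θ ≤ (cc i : ℝ)), (c i : ℝ)
      ≤ ((Finset.univ.filter (fun i => θ ≤ (cc i : ℝ))).card : ℝ) * D := by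
    have := Finset.sum_le_card_nsmul (Finset.univ.filter (fun i => θ ≤ (cc i : ℝ)))
      (fun i => (c i : ℝ)) D (fun i _ => hD i)
    simpa [nsmul_eq_mul] using this
  have h2 : ∑ i ∈ Finset.univ.filter (fun i => ¬ θ ≤ (cc i : ℝ)), (c i : ℝ)
      ≤ ((Finset.univ.filter (fun i => ¬ θ ≤ (cc i : ℝ))).card : ℝ) * θ := by
    have := Finset.sum_le_card_nsmul (Finset.univ.filter (fun i => ¬ θ ≤ (cc i : ℝ)))
      (fun i => (c i : ℝ)) θ (fun i hi => by
        simp only [Finset.mem_filter] at hi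
        have : (c i : ℝ) ≤ (cc i : ℝ) := by exact_mod_cast hcc i
        linarith [lt_of_not_ge hi.2])
    simpa [nsmul_eq_mul] using this
  have h3 : ((Finset.univ.filter (fun i => ¬ θ ≤ (cc i : ℝ))).card : ℝ) * θ
      ≤ (Fintype.card ι : ℝ) * θ := by
    apply mul_le_mul_of_nonneg_right _ hθ
    exact_mod_cast le_trans (Finset.card_filter_le _ _) (le_of_eq (Finset.card_univ))
  linarith

lemma sq_conj_aux {x y w g : G} (hx : x * x = g) (hy : y * y = g) (hw : x⁻¹ * y = w) :
    w * x * w = x := by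
  have hy' : y = x * w := by rw [← hw]; group
  have h5 : x * (w * x * w) = x * x := by
    calc x * (w * x * w) = (x * w) * (x * w) := by group
      _ = y * y := by rw [← hy']
      _ = x * x := by rw [hy, ← hx]
  exact mul_left_cancel h5

lemma sq_comm_aux {x x₁ y y₁ w g : G} (hx : x * x = g) (hy : y * y = g) (hw : x⁻¹ * y = w)
    (hx₁ : x₁ * x₁ = g) (hy₁ : y₁ * y₁ = g) (hw₁ : x₁⁻¹ * y₁ = w) :
    w * (x * x₁⁻¹) = (x * x₁⁻¹) * w := by
  have e := sq_conj_aux hx hy hw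
  have e' := sq_conj_aux hx₁ hy₁ hw₁
  calc w * (x * x₁⁻¹) = (w * x * w) * (w⁻¹ * x₁⁻¹) := by group
    _ = x * (w⁻¹ * x₁⁻¹) := by rw [e]
    _ = x * ((w * x₁ * w)⁻¹ * w) := by group
    _ = x * (x₁⁻¹ * w) := by rw [e']
    _ = (x * x₁⁻¹) * w := by group

lemma pcomm_fiber_aux {u y y₀ g : G} (h : pcomm u y = g) (h₀ : pcomm u y₀ = g) :
    u * (y * y₀⁻¹) = (y * y₀⁻¹) * u := by
  have e1 : y⁻¹ * u * y = u * g := by rw [← h]; simp only [pcomm]; group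
  have e2 : y₀⁻¹ * u * y₀ = u * g := by rw [← h₀]; simp only [pcomm]; group
  have e3 : y⁻¹ * u * y = y₀⁻¹ * u * y₀ := by rw [e1, e2]
  calc u * (y * y₀⁻¹) = y * (y⁻¹ * u * y) * y₀⁻¹ := by group
    _ = y * (y₀⁻¹ * u * y₀) * y₀⁻¹ := by rw [e3]
    _ = (y * y₀⁻¹) * u := by group

end Infra

lemma base_case (ε : ℝ) (hε : 0 < ε) :
    ∃ n : ℕ, 0 < n ∧ ∀ (G : Type) [Group G] [Finite G] (g : G),
      ε ≤ wordProb (sqCommWord 1) g →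
        (⊤ : Subgroup ↥(kerInt G (Equiv.Perm (Fin n)))).lowerCentralSeries 1 = ⊥ := by
  classical
  refine ⟨max 1 ⌈2 / ε ^ 2⌉₊, le_max_left 1 _, ?_⟩
  set n := max 1 ⌈2 / ε ^ 2⌉₊ with hn_def
  have hn : (2 / ε ^ 2 : ℝ) ≤ (n : ℝ) := by
    refine le_trans (Nat.le_ceil _) ?_
    exact_mod_cast Nat.le_max_right 1 _
  intro G _ _ g hprob
  have : Fintype G := Fintype.ofFinite G
  set cG : ℝ := (Nat.card G : ℝ) with hcG_def
  have hG0 : (0 : ℝ) < cG := by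
    rw [hcG_def]; exact_mod_cast Nat.card_pos
  have hTnum : Nat.card {f : Fin 1 → G // FreeGroup.lift f (sqCommWord 1) = g}
      = Nat.card {x : G // x * x = g} := by
    apply Nat.card_congr
    refine Equiv.subtypeEquiv (Equiv.funUnique (Fin 1) G) (fun f => ?_)
    rw [lift_sqCommWord_one]
    simp [Equiv.funUnique]
  have hT : ε * cG ≤ (Nat.card {x : G // x * x = g} : ℝ) := by
    rw [wordProb, hTnum, pow_one] at hprob
    exact (le_div_iff₀ hG0).mp hprob
  let ι := {p : G × G // p.1 * p.1 = g ∧ p.2 * p.2 = g}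
  let v : ι → G := fun a => a.1.1⁻¹ * a.1.2
  have hι : (Fintype.card ι : ℝ) = (Nat.card {x : G // x * x = g} : ℝ) ^ 2 := by
    have h1 : Fintype.card ι = Fintype.card ({x : G // x * x = g} × {x : G // x * x = g}) :=
      Fintype.card_congr (Equiv.subtypeProdEquivProd (p := fun x : G => x * x = g) (q := fun x : G => x * x = g))
    rw [h1, Fintype.card_prod, Nat.card_eq_fintype_card]
    push_cast
    ring
  have hfib : ∀ w : G, Fintype.card {a : ι // v a = w}
      ≤ Nat.card ↥(Subgroup.centralizer ({w} : Set G)) := by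
    intro w
    rcases isEmpty_or_nonempty {a : ι // v a = w} with he | ⟨a₀⟩
    · simp [Fintype.card_eq_zero]
    · obtain ⟨⟨⟨x₁, y₁⟩, hx₁, hy₁⟩, hw₁'⟩ := a₀
      have hw₁ : x₁⁻¹ * y₁ = w := hw₁'
      rw [Nat.card_eq_fintype_card]
      have hmem : ∀ a : {a : ι // v a = w},
          a.1.1.1 * x₁⁻¹ ∈ Subgroup.centralizer ({w} : Set G) := by
        rintro ⟨⟨⟨x, y⟩, hx, hy⟩, hw'⟩
        have hw : x⁻¹ * y = w := hw'
        rw [Subgroup.mem_centralizer_iff]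
        intro h hh
        rw [Set.mem_singleton_iff] at hh
        subst hh
        exact sq_comm_aux hx hy hw hx₁ hy₁ hw₁
      refine Fintype.card_le_of_injective (fun a => ⟨a.1.1.1 * x₁⁻¹, hmem a⟩) ?_
      rintro ⟨⟨⟨x, y⟩, hx, hy⟩, hw'⟩ ⟨⟨⟨x', y'⟩, hx', hy'⟩, hw''⟩ hEq
      have hw : x⁻¹ * y = w := hw'
      have hw2 : x'⁻¹ * y' = w := hw''
      simp only [Subtype.mk.injEq] at hEq
      have hxx : x = x' := mul_right_cancel hEq
      have hyy : y = y' := by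
        have e1 : y = x * w := by rw [← hw]; group
        have e2 : y' = x' * w := by rw [← hw2]; group
        rw [e1, e2, hxx]
      apply Subtype.ext
      apply Subtype.ext
      rw [Prod.mk.injEq]
      exact ⟨hxx, hyy⟩
  set θ : ℝ := ε ^ 2 / 2 * cG with hθ_def
  set c : G → ℕ := fun w => Fintype.card {a : ι // v a = w} with hc_def
  set cc : G → ℕ := fun w => Nat.card ↥(Subgroup.centralizer ({w} : Set G)) with hcc_def
  have hccG : ∀ w, cc w ≤ Nat.card G := fun w => Subgroup.card_le_card_group _
  have hS : ε ^ 2 * cG ^ 2 ≤ ∑ w : G, (c w : ℝ) := by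
    have htot := card_eq_sum_card_fiber v
    have htot' : (Fintype.card ι : ℝ) = ∑ w : G, (c w : ℝ) := by
      rw [htot]; push_cast; rfl
    rw [← htot', hι]
    nlinarith [hT, mul_pos hε hG0,
      sq_nonneg ((Nat.card {x : G // x * x = g} : ℝ) - ε * cG)]
  have hkey := exists_dense_large G c cc cG θ (ε ^ 2 * cG ^ 2)
    (by rw [hθ_def]; positivity)
    (fun w => by
      have h1 : (c w : ℝ) ≤ (cc w : ℝ) := by exact_mod_cast hfib w
      have h2 : (cc w : ℝ) ≤ cG := by rw [hcG_def]; exact_mod_cast hccG w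
      linarith)
    hfib hS
  set B := Finset.univ.filter (fun w : G => θ ≤ (cc w : ℝ)) with hB_def
  have hcardG : (Fintype.card G : ℝ) = cG := by
    rw [hcG_def, Nat.card_eq_fintype_card]
  rw [hcardG] at hkey
  have hB : ε ^ 2 / 2 * cG ≤ (B.card : ℝ) := by
    have h9 : (ε ^ 2 / 2 * cG) * cG ≤ (B.card : ℝ) * cG := by
      rw [hθ_def] at hkey
      nlinarith
    exact le_of_mul_le_mul_right h9 hG0
  set M := Subgroup.closure (↑B : Set G) with hM_def
  have hBM : (B.card : ℕ) ≤ Nat.card ↥M := by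
    have h1 : Nat.card ↥(↑B : Set G) = B.card := by
      rw [Nat.card_coe_set_eq, Set.ncard_coe_finset]
    rw [← h1]
    exact Nat.card_le_card_of_injective (Set.inclusion Subgroup.subset_closure)
      (Set.inclusion_injective _)
  have hδn : 1 / (ε ^ 2 / 2) ≤ (n : ℝ) := by rw [one_div_div]; exact hn
  have hMindex : M.index ≤ n := by
    apply index_le_of_card_ge (δ := ε ^ 2 / 2) (by positivity) ?_ hδn
    rw [← hcG_def]
    calc ε ^ 2 / 2 * cG ≤ (B.card : ℝ) := hB
      _ ≤ (Nat.card ↥M : ℝ) := by exact_mod_cast hBM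
  have hKM : kerInt G (Equiv.Perm (Fin n)) ≤ M := kerInt_le_of_index_le hMindex
  have hKC : ∀ w ∈ B, kerInt G (Equiv.Perm (Fin n)) ≤ Subgroup.centralizer ({w} : Set G) := by
    intro w hw
    apply kerInt_le_of_index_le
    apply index_le_of_card_ge (δ := ε ^ 2 / 2) (by positivity) ?_ hδn
    rw [← hcG_def]
    exact (Finset.mem_filter.mp hw).2
  rw [lowerCentralSeries_one, eq_bot_iff, commutator_def, Subgroup.commutator_le]
  intro s hs t ht
  rw [Subgroup.mem_bot, commutatorElement_eq_one_iff_commute]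
  have hsM : (s : G) ∈ M := hKM s.2
  have hMle : M ≤ Subgroup.centralizer ({(t : G)} : Set G) := by
    rw [hM_def, Subgroup.closure_le]
    intro w hw
    rw [SetLike.mem_coe, Subgroup.mem_centralizer_iff]
    intro h hh
    rw [Set.mem_singleton_iff] at hh
    subst hh
    have h2 := hKC w (Finset.mem_coe.mp hw) t.2
    rw [Subgroup.mem_centralizer_iff] at h2
    exact (h2 w rfl).symm
  have hst := hMle hsM
  rw [Subgroup.mem_centralizer_iff] at hst
  have hc' := hst _ rfl
  have : ((s * t : _) : G) = ((t * s : _) : G) := by push_cast; exact hc'.symm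
  exact Subtype.ext this

lemma natCard_eq_sum_card_fiber {α β : Type*} [Finite α] [Fintype β] (f : α → β) :
    Nat.card α = ∑ b : β, Nat.card {a : α // f a = b} := by
  classical
  have : Fintype α := Fintype.ofFinite α
  calc Nat.card α = Fintype.card α := Nat.card_eq_fintype_card
    _ = ∑ b : β, Fintype.card {a : α // f a = b} := by
        rw [← Fintype.card_sigma]
        exact Fintype.card_congr (Equiv.sigmaFiberEquiv f).symm
    _ = ∑ b : β, Nat.card {a : α // f a = b} := by
        apply Finset.sum_congr rfl
        intro b _
        rw [Nat.card_eq_fintype_card]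

set_option maxHeartbeats 1000000 in
theorem aux_induction : ∀ (k : ℕ), 1 ≤ k → ∀ (ε : ℝ), 0 < ε →
    ∃ n : ℕ, 0 < n ∧ ∀ (G : Type) [Group G] [Finite G] (g : G),
      ε ≤ wordProb (sqCommWord k) g →
        (⊤ : Subgroup ↥(kerInt G (Equiv.Perm (Fin n)))).lowerCentralSeries k = ⊥ := by
  intro k hk
  induction k, hk using Nat.le_induction with
  | base => exact base_case
  | succ k hk IH =>
    intro ε hε
    obtain ⟨n', hn'pos, IH'⟩ := IH (ε / 2) (by positivity)
    refine ⟨max n' (max 1 ⌈2 / ε⌉₊), lt_of_lt_of_le hn'pos (le_max_left _ _), ?_⟩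
    set n := max n' (max 1 ⌈2 / ε⌉₊) with hn_def
    have hn'le : n' ≤ n := le_max_left _ _
    have hn : (2 / ε : ℝ) ≤ (n : ℝ) := by
      refine le_trans (Nat.le_ceil _) ?_
      exact_mod_cast le_trans (Nat.le_max_right 1 _) (le_max_right n' _)
    intro G _ _ g hprob
    have : Fintype G := Fintype.ofFinite G
    rw [wordProb] at hprob
    set cG : ℝ := (Nat.card G : ℝ) with hcG_def
    have hG0 : (0 : ℝ) < cG := by rw [hcG_def]; exact_mod_cast Nat.card_pos
    set K := kerInt G (Equiv.Perm (Fin n)) with hK_def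
    set u : (Fin k → G) → G := fun x => FreeGroup.lift x (sqCommWord k) with hu_def
    let ι := {p : G × (Fin k → G) // pcomm (u p.2) p.1 = g}
    let v : ι → (Fin k → G) := fun a => a.1.2
    have hnum : Nat.card {f : Fin (k+1) → G // FreeGroup.lift f (sqCommWord (k+1)) = g}
        = Nat.card ι := by
      apply Nat.card_congr
      refine Equiv.subtypeEquiv ((Fin.insertNthEquiv (fun _ => G) (Fin.last k)).symm) (fun f => ?_)
      rw [lift_sqCommWord_succ hk]
      have hE2 : (((Fin.insertNthEquiv (fun _ => G) (Fin.last k)).symm) f).2 = f ∘ Fin.castSucc := by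
        funext j
        show f ((Fin.last k).succAbove j) = _
        simp [Fin.succAbove_last]
      have hE1 : (((Fin.insertNthEquiv (fun _ => G) (Fin.last k)).symm) f).1 = f (Fin.last k) := rfl
      rw [show pcomm (u ((((Fin.insertNthEquiv (fun _ => G) (Fin.last k)).symm) f).2))
            ((((Fin.insertNthEquiv (fun _ => G) (Fin.last k)).symm) f).1)
          = pcomm (u (f ∘ Fin.castSucc)) (f (Fin.last k)) by rw [hE1, hE2]]
    have hfib : ∀ x : Fin k → G, Nat.card {a : ι // v a = x}
        ≤ Nat.card ↥(Subgroup.centralizer ({u x} : Set G)) := by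
      intro x
      rcases isEmpty_or_nonempty {a : ι // v a = x} with he | ⟨a₀⟩
      · simp [Nat.card_of_isEmpty]
      · obtain ⟨⟨⟨y₀, x₀⟩, hsol₀'⟩, hx₀'⟩ := a₀
        have hx₀ : x₀ = x := hx₀'
        subst hx₀
        have hsol₀ : pcomm (u x₀) y₀ = g := hsol₀'
        have hmem : ∀ a : {a : ι // v a = x₀},
            a.1.1.1 * y₀⁻¹ ∈ Subgroup.centralizer ({u x₀} : Set G) := by
          rintro ⟨⟨⟨y, x'⟩, hsol'⟩, hx'⟩
          have hx'' : x' = x₀ := hx'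
          subst hx''
          have hsol : pcomm (u x') y = g := hsol'
          rw [Subgroup.mem_centralizer_iff]
          intro h hh
          rw [Set.mem_singleton_iff] at hh
          subst hh
          exact pcomm_fiber_aux hsol hsol₀
        refine Nat.card_le_card_of_injective (fun a => ⟨a.1.1.1 * y₀⁻¹, hmem a⟩) ?_
        rintro ⟨⟨⟨y, x'⟩, hsol'⟩, hx'⟩ ⟨⟨⟨y2, x2⟩, hsol2'⟩, hx2'⟩ hEq
        simp only [Subtype.mk.injEq] at hEq
        have hyy : y = y2 := mul_right_cancel hEq
        apply Subtype.ext
        apply Subtype.ext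
        rw [Prod.mk.injEq]
        exact ⟨hyy, (show x' = x₀ from hx').trans (show x2 = x₀ from hx2').symm⟩
    have hprob' : ε * cG ^ (k+1) ≤ (Nat.card ι : ℝ) := by
      rw [hnum] at hprob
      have hpow : (0:ℝ) < cG ^ (k+1) := by positivity
      exact (le_div_iff₀ hpow).mp hprob
    set θ : ℝ := ε / 2 * cG with hθ_def
    set c : (Fin k → G) → ℕ := fun x => Nat.card {a : ι // v a = x} with hc_def
    set cc : (Fin k → G) → ℕ :=
      fun x => Nat.card ↥(Subgroup.centralizer ({u x} : Set G)) with hcc_def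
    have hS : ε * cG^(k+1) ≤ ∑ x : Fin k → G, (c x : ℝ) := by
      have htot := natCard_eq_sum_card_fiber v
      have htot' : (Nat.card ι : ℝ) = ∑ x : Fin k → G, (c x:ℝ) := by
        rw [htot]
        push_cast
        rfl
      rw [← htot']
      exact hprob'
    have hkey := exists_dense_large (Fin k → G) c cc cG θ (ε * cG^(k+1))
      (by rw [hθ_def]; positivity)
      (fun x => by
        have h1 : (c x:ℝ) ≤ (cc x:ℝ) := by exact_mod_cast hfib x
        have h2 : (cc x:ℝ) ≤ cG := by
          rw [hcG_def]; exact_mod_cast Subgroup.card_le_card_group _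
        linarith)
      hfib hS
    set B := Finset.univ.filter (fun x : Fin k → G => θ ≤ (cc x : ℝ)) with hB_def
    have hcardfun : (Fintype.card (Fin k → G) : ℝ) = cG ^ k := by
      rw [Fintype.card_fun, Fintype.card_fin, hcG_def, Nat.card_eq_fintype_card]
      push_cast
      ring
    rw [hcardfun] at hkey
    have hBcard : ε/2 * cG^k ≤ (B.card : ℝ) := by
      have hpow : cG^(k+1) = cG^k * cG := pow_succ cG k
      have h9 : (ε/2 * cG^k) * cG ≤ (B.card:ℝ) * cG := by
        rw [hθ_def] at hkey
        nlinarith [pow_pos hG0 k]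
      exact le_of_mul_le_mul_right h9 hG0
    have hδn : 1 / (ε/2) ≤ (n:ℝ) := by rw [one_div_div]; exact hn
    have hKC : ∀ x ∈ B, K ≤ Subgroup.centralizer ({u x} : Set G) := by
      intro x hx
      apply kerInt_le_of_index_le
      apply index_le_of_card_ge (δ := ε/2) (by positivity) ?_ hδn
      rw [← hcG_def]
      exact (Finset.mem_filter.mp hx).2
    set X : Set G := u '' (↑B : Set (Fin k → G)) with hX_def
    set N := Subgroup.normalClosure X with hN_def
    have hKnormal : K.Normal := kerInt_normal_s10 _
    have hCnormal : (Subgroup.centralizer (K : Set G)).Normal :=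
      centralizer_normal_of_normal K hKnormal
    have hNle : N ≤ Subgroup.centralizer (K : Set G) := by
      haveI := hCnormal
      apply Subgroup.normalClosure_le_normal
      rintro w ⟨x, hx, rfl⟩
      rw [SetLike.mem_coe, Subgroup.mem_centralizer_iff]
      intro h hh
      have h3 := hKC x (Finset.mem_coe.mp hx) hh
      rw [Subgroup.mem_centralizer_iff] at h3
      exact (h3 (u x) rfl).symm
    haveI hNnormal : N.Normal := Subgroup.normalClosure_normal
    set Q := G ⧸ N with hQ_def
    haveI : Finite Q := Quotient.finite _
    set π : G →* Q := QuotientGroup.mk' N with hπ_def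
    set S1 := {xb : Fin k → Q // FreeGroup.lift xb (sqCommWord k) = (1 : Q)} with hS1_def
    have hBQ : (B.card : ℝ) ≤ (Nat.card S1 : ℝ) * (Nat.card ↥N : ℝ)^k := by
      obtain ⟨rep, hrep⟩ : ∃ rep : Q → G, ∀ q, π (rep q) = q := by
        have h := fun q : Q => QuotientGroup.mk'_surjective N q
        choose rep hrep using h
        exact ⟨rep, hrep⟩
      have hXN : ∀ x ∈ B, u x ∈ N := fun x hx =>
        Subgroup.subset_normalClosure ⟨x, Finset.mem_coe.mpr hx, rfl⟩
      have hsol : ∀ x : {x : Fin k → G // x ∈ B},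
          FreeGroup.lift (fun i => π (x.1 i)) (sqCommWord k) = (1 : Q) := by
        intro x
        rw [← monoidHom_lift]
        have hker : u x.1 ∈ π.ker := by
          rw [hπ_def, QuotientGroup.ker_mk']
          exact hXN x.1 x.2
        rwa [MonoidHom.mem_ker] at hker
      have hmemN : ∀ (x : {x : Fin k → G // x ∈ B}) (i : Fin k),
          (rep (π (x.1 i)))⁻¹ * x.1 i ∈ N := by
        intro x i
        have h1 : (rep (π (x.1 i)))⁻¹ * x.1 i ∈ π.ker := by
          rw [MonoidHom.mem_ker, map_mul, map_inv, hrep]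
          group
        rwa [hπ_def, QuotientGroup.ker_mk'] at h1
      let F : {x : Fin k → G // x ∈ B} → S1 × (Fin k → ↥N) := fun x =>
        (⟨fun i => π (x.1 i), hsol x⟩, fun i => ⟨(rep (π (x.1 i)))⁻¹ * x.1 i, hmemN x i⟩)
      have hFinj : Function.Injective F := by
        intro a b hab
        rw [Prod.mk.injEq] at hab
        obtain ⟨h1, h2⟩ := hab
        have h1' : ∀ i, π (a.1 i) = π (b.1 i) := by
          intro i
          exact congrFun (congrArg Subtype.val h1) i
        apply Subtype.ext
        funext i
        have h2' := congrFun h2 i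
        rw [Subtype.mk.injEq] at h2'
        rw [h1'] at h2'
        exact mul_left_cancel h2'
      have hcardB : (B.card : ℕ) = Nat.card {x : Fin k → G // x ∈ B} := by
        rw [Nat.card_eq_fintype_card, Fintype.card_coe]
      have hle := Nat.card_le_card_of_injective F hFinj
      haveI : Fintype ↥N := Fintype.ofFinite _
      haveI : Fintype S1 := Fintype.ofFinite _
      have hcard : Nat.card (S1 × (Fin k → ↥N)) = Nat.card S1 * (Nat.card ↥N)^k := by
        rw [Nat.card_eq_fintype_card, Fintype.card_prod, Fintype.card_fun, Fintype.card_fin,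
          Nat.card_eq_fintype_card, Nat.card_eq_fintype_card]
      rw [hcard, ← hcardB] at hle
      exact_mod_cast hle
    have hQcard : cG = (Nat.card Q : ℝ) * (Nat.card ↥N : ℝ) := by
      rw [hcG_def]
      exact_mod_cast Subgroup.card_eq_card_quotient_mul_card_subgroup N
    have hN0 : (0:ℝ) < (Nat.card ↥N : ℝ) := by exact_mod_cast Nat.card_pos
    have hQ0 : (0:ℝ) < (Nat.card Q : ℝ) := by exact_mod_cast Nat.card_pos
    have hwpQ : (ε/2 : ℝ) ≤ wordProb (sqCommWord k) (1 : Q) := by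
      rw [wordProb]
      rw [le_div_iff₀ (by positivity)]
      have hsplit : cG^k = (Nat.card Q:ℝ)^k * (Nat.card ↥N:ℝ)^k := by
        rw [hQcard, mul_pow]
      have h1 : (ε/2) * ((Nat.card Q:ℝ)^k * (Nat.card ↥N:ℝ)^k)
          ≤ (Nat.card S1:ℝ) * (Nat.card ↥N:ℝ)^k := by
        rw [← hsplit]
        calc (ε/2) * cG^k ≤ (B.card : ℝ) := hBcard
          _ ≤ _ := hBQ
      have hNpow : (0:ℝ) < (Nat.card ↥N:ℝ)^k := by positivity
      have h3 : ((ε/2) * (Nat.card Q:ℝ)^k) * (Nat.card ↥N:ℝ)^k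
          ≤ (Nat.card S1:ℝ) * (Nat.card ↥N:ℝ)^k := by
        calc ((ε/2) * (Nat.card Q:ℝ)^k) * (Nat.card ↥N:ℝ)^k
            = (ε/2) * ((Nat.card Q:ℝ)^k * (Nat.card ↥N:ℝ)^k) := by ring
          _ ≤ _ := h1
      exact le_of_mul_le_mul_right h3 hNpow
    have hIH := IH' Q (1 : Q) hwpQ
    set K' := kerInt Q (Equiv.Perm (Fin n')) with hK'_def
    have hmapmem : ∀ t : ↥K, (π.comp K.subtype) t ∈ K' := fun t =>
      kerInt_map_mem π hn'le t.2
    set φ : ↥K →* ↥K' := (π.comp K.subtype).codRestrict K' hmapmem with hφ_def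
    have hφles := lowerCentralSeries.map φ k
    rw [hIH] at hφles
    show (⊤ : Subgroup ↥K).lowerCentralSeries (k+1) = ⊥
    rw [eq_bot_iff]
    have hstep : (⊤ : Subgroup ↥K).lowerCentralSeries (k+1) = ⁅(⊤ : Subgroup ↥K).lowerCentralSeries k, (⊤ : Subgroup ↥K)⁆ :=
      rfl
    rw [hstep, Subgroup.commutator_le]
    intro cEl hcEl t ht
    rw [Subgroup.mem_bot, commutatorElement_eq_one_iff_commute]
    have h1 : φ cEl ∈ Subgroup.map φ ((⊤ : Subgroup ↥K).lowerCentralSeries k) :=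
      Subgroup.mem_map_of_mem φ hcEl
    have h2 : φ cEl = 1 := by
      have h2' := hφles h1
      rwa [Subgroup.mem_bot] at h2'
    have h3 : π (cEl : G) = 1 := by
      have hval : ((φ cEl : ↥K') : Q) = π (cEl : G) := rfl
      rw [← hval, h2]
      rfl
    have h4 : (cEl : G) ∈ N := by
      have hker : (cEl : G) ∈ π.ker := by rw [MonoidHom.mem_ker]; exact h3
      rwa [hπ_def, QuotientGroup.ker_mk'] at hker
    have h5 := hNle h4
    rw [Subgroup.mem_centralizer_iff] at h5
    have h6 := h5 (t : G) t.2
    have hfin : ((cEl * t : _) : G) = ((t * cEl : _) : G) := by push_cast; exact h6.symm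
    exact Subtype.ext hfin

/-- For `w = [x₁², x₂, …, x_k]` there is an `n = n(k, ε)` such that
for every finite group `G` with `P_{G,w}(g) ≥ ε` for some `g`, the subgroup
`G(S_n)` is nilpotent of class at most `k`, i.e. `γ_{k+1}(G(S_n)) = 1`. -/
theorem stmt10 (k : ℕ) (hk : 1 ≤ k) (ε : ℝ) (hε : 0 < ε) :
    ∃ n : ℕ, 0 < n ∧ ∀ (G : Type) [Group G] [Finite G] (g : G),
      ε ≤ wordProb (sqCommWord k) g →
        (⊤ : Subgroup ↥(kerInt G (Equiv.Perm (Fin n)))).lowerCentralSeries k = ⊥ :=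
  aux_induction k hk ε hε
end

section
/- Let w = w(x_1, …, x_k) be a word and let w'(x_1, …, x_{k+1}) = [w(x_1, …, x_k), x_{k+1}]. Let G be a finite group and suppose that P_{G,w'}(g) ≥ ε > 0 for some g ∈ G. Then for every real δ with 0 < δ < ε, the probability that k independent uniformly random elements g_1, …, g_k ∈ G satisfy |G : C_G(w(g_1, …, g_k))| < 1/δ is strictly greater than ε − δ; that is, |{(g_1,…,g_k) ∈ G^k : |G : C_G(w(g_1,…,g_k))| < 1/δ}| / |G|^k > ε − δ. -/
open scoped Classical

-- auxiliary lemmas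

lemma lift_key {k : ℕ} {G : Type*} [Group G] (w : FreeGroup (Fin k)) (F : Fin (k+1) → G) :
    FreeGroup.lift F (pcomm (FreeGroup.map Fin.castSucc w) (FreeGroup.of (Fin.last k)))
      = pcomm (FreeGroup.lift (F ∘ Fin.castSucc) w) (F (Fin.last k)) := by
  have hm : FreeGroup.lift F (FreeGroup.map Fin.castSucc w)
      = FreeGroup.lift (F ∘ Fin.castSucc) w := by
    have : (FreeGroup.lift F).comp (FreeGroup.map Fin.castSucc)
        = FreeGroup.lift (F ∘ Fin.castSucc) := by
      ext x
      simp
    exact DFunLike.congr_fun this w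
  simp [pcomm, map_mul, map_inv, hm]

/-- Lemma 2.1: If `P_{G,w'}(g) ≥ ε` for `w' = [w, x_{k+1}]`, then for
`0 < δ < ε`, the proportion of tuples `(g₁, …, g_k)` with
`|G : C_G(w(g₁, …, g_k))| < 1/δ` exceeds `ε - δ`. -/
theorem stmt12 (k : ℕ) (w : FreeGroup (Fin k)) (G : Type*) [Group G] [Finite G]
    (ε δ : ℝ) (hδ : 0 < δ) (hδε : δ < ε) (g : G)
    (h : ε ≤ wordProb (pcomm (FreeGroup.map Fin.castSucc w) (FreeGroup.of (Fin.last k))) g) :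
    ε - δ <
      (Nat.card {f : Fin k → G //
          ((Subgroup.centralizer ({FreeGroup.lift f w} : Set G)).index : ℝ) < 1 / δ} : ℝ) /
        (Nat.card G : ℝ) ^ k := by
  classical
  have : Fintype G := Fintype.ofFinite G
  set N : ℕ := Nat.card G with hNdef
  have hN0 : 0 < N := Nat.card_pos
  have hNR : (0:ℝ) < (N:ℝ) := by exact_mod_cast hN0
  have hNk : (0:ℝ) < (N:ℝ) ^ k := by positivity
  -- the count of solutions for the commutator word, for each fixed f
  set c : (Fin k → G) → ℕ :=
    fun f => Nat.card {x : G // pcomm (FreeGroup.lift f w) x = g} with hcdef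
  -- total count equals the sum of the c f
  have htotal :
      Nat.card {F : Fin (k+1) → G // FreeGroup.lift F
          (pcomm (FreeGroup.map Fin.castSucc w) (FreeGroup.of (Fin.last k))) = g}
        = ∑ f : Fin k → G, c f := by
    have e1 : {F : Fin (k+1) → G // FreeGroup.lift F
          (pcomm (FreeGroup.map Fin.castSucc w) (FreeGroup.of (Fin.last k))) = g}
        ≃ {q : (Fin k → G) × G // pcomm (FreeGroup.lift q.1 w) q.2 = g} :=
      { toFun := fun F => ⟨(F.1 ∘ Fin.castSucc, F.1 (Fin.last k)),
          by have := F.2; rwa [lift_key] at this⟩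
        invFun := fun q => ⟨Fin.snoc q.1.1 q.1.2, by
          rw [lift_key]
          have h1 : (Fin.snoc q.1.1 q.1.2 : Fin (k+1) → G) ∘ Fin.castSucc = q.1.1 := by
            funext i; simp [Fin.snoc_castSucc]
          have h2 : (Fin.snoc q.1.1 q.1.2 : Fin (k+1) → G) (Fin.last k) = q.1.2 := by
            simp
          rw [h1, h2]; exact q.2⟩
        left_inv := fun F => by
          apply Subtype.ext
          exact Fin.snoc_init_self F.1
        right_inv := fun q => by
          apply Subtype.ext
          apply Prod.ext
          · funext i; simp [Fin.snoc_castSucc]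
          · simp }
    have e2 : {q : (Fin k → G) × G // pcomm (FreeGroup.lift q.1 w) q.2 = g}
        ≃ Σ f : Fin k → G, {x : G // pcomm (FreeGroup.lift f w) x = g} :=
      Equiv.subtypeProdEquivSigmaSubtype (fun (f : Fin k → G) (x : G) => pcomm (FreeGroup.lift f w) x = g)
    rw [Nat.card_congr (e1.trans e2)]
    simp only [Nat.card_eq_fintype_card, Fintype.card_sigma, hcdef]
  -- pointwise bound : c f ≤ N / index
  have hc : ∀ f : Fin k → G, (c f : ℝ)
      ≤ (N:ℝ) / ((Subgroup.centralizer ({FreeGroup.lift f w} : Set G)).index : ℝ) := by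
    intro f
    set a := FreeGroup.lift f w with ha
    set C := Subgroup.centralizer ({a} : Set G) with hC
    have hidx0 : C.index ≠ 0 := Subgroup.index_ne_zero_of_finite
    have hidxR : (0:ℝ) < (C.index : ℝ) := by
      exact_mod_cast Nat.pos_of_ne_zero hidx0
    have hcard : (Nat.card C : ℝ) * (C.index : ℝ) = (N:ℝ) := by
      exact_mod_cast congrArg (Nat.cast : ℕ → ℝ) (Subgroup.card_mul_index C)
    rcases isEmpty_or_nonempty {x : G // pcomm a x = g} with he | hne
    · have : c f = 0 := by simp [hcdef, Nat.card_of_isEmpty, ha]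
      simp only [this, Nat.cast_zero]
      positivity
    · obtain ⟨x₀, hx₀⟩ := hne
      have hinj : Function.Injective
          (fun x : {x : G // pcomm a x = g} => (⟨x.1 * x₀⁻¹, by
            rw [Subgroup.mem_centralizer_iff]
            intro b hb
            rcases hb with rfl
            have e1 : x.1⁻¹ * a * x.1 = x₀⁻¹ * a * x₀ := by
              have h12 : pcomm a x.1 = pcomm a x₀ := x.2.trans hx₀.symm
              have h13 : a⁻¹ * (x.1⁻¹ * a * x.1) = a⁻¹ * (x₀⁻¹ * a * x₀) := by
                simpa [pcomm, mul_assoc] using h12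
              exact mul_left_cancel h13
            calc a * (x.1 * x₀⁻¹) = x.1 * (x.1⁻¹ * a * x.1) * x₀⁻¹ := by group
              _ = x.1 * (x₀⁻¹ * a * x₀) * x₀⁻¹ := by rw [e1]
              _ = (x.1 * x₀⁻¹) * a := by group⟩ : C)) := by
        intro x y hxy
        apply Subtype.ext
        have := congrArg Subtype.val hxy
        simpa using mul_right_cancel (b := x₀⁻¹) this
      have hle : c f ≤ Nat.card C := Nat.card_le_card_of_injective _ hinj
      have : (c f : ℝ) ≤ (Nat.card C : ℝ) := by exact_mod_cast hle
      calc (c f : ℝ) ≤ (Nat.card C : ℝ) := this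
        _ = (N:ℝ) / (C.index : ℝ) := by rw [eq_div_iff (ne_of_gt hidxR)]; exact hcard
  -- δ < 1 since ε ≤ 1
  set T : ℕ := Nat.card {F : Fin (k+1) → G // FreeGroup.lift F
      (pcomm (FreeGroup.map Fin.castSucc w) (FreeGroup.of (Fin.last k))) = g} with hT
  have hNk1 : (0:ℝ) < (N:ℝ)^(k+1) := by positivity
  have hεT : ε * (N:ℝ)^(k+1) ≤ (T:ℝ) := by
    have h' := h
    simp only [wordProb] at h'
    calc ε * (N:ℝ)^(k+1) ≤ ((T:ℝ) / (N:ℝ)^(k+1)) * (N:ℝ)^(k+1) :=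
          mul_le_mul_of_nonneg_right h' (le_of_lt hNk1)
      _ = (T:ℝ) := by field_simp
  have hT_le : (T:ℝ) ≤ (N:ℝ)^(k+1) := by
    have h1 : T ≤ Nat.card (Fin (k+1) → G) :=
      Nat.card_le_card_of_injective _ Subtype.val_injective
    have h2 : Nat.card (Fin (k+1) → G) = N^(k+1) := by
      rw [Nat.card_fun]
      simp [hNdef]
    rw [h2] at h1
    exact_mod_cast h1
  have hε1 : ε ≤ 1 := by nlinarith
  have hδ1 : δ < 1 := lt_of_lt_of_le hδε hε1
  -- the good set
  set p : (Fin k → G) → Prop :=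
    fun f => ((Subgroup.centralizer ({FreeGroup.lift f w} : Set G)).index : ℝ) < 1/δ with hp
  set A : Finset (Fin k → G) := Finset.univ.filter p with hA
  set B : Finset (Fin k → G) := Finset.univ.filter (fun f => ¬ p f) with hB
  have hAcard : (Nat.card {f : Fin k → G // p f}) = A.card := by
    rw [Nat.card_eq_fintype_card, Fintype.card_subtype]
  have hAB : (A.card : ℝ) + (B.card : ℝ) = (N:ℝ)^k := by
    have h1 : A.card + B.card = (Finset.univ : Finset (Fin k → G)).card :=
      Finset.card_filter_add_card_filter_not (p := p)
    have h2 : (Finset.univ : Finset (Fin k → G)).card = N^k := by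
      rw [Finset.card_univ, Fintype.card_fun]
      simp [hNdef, Nat.card_eq_fintype_card]
    rw [h2] at h1
    exact_mod_cast h1
  -- bound the sum
  have hsum : ((∑ f : Fin k → G, c f : ℕ) : ℝ)
      ≤ (A.card : ℝ) * N + (B.card : ℝ) * ((N:ℝ) * δ) := by
    push_cast
    have hb : ∀ f ∈ (Finset.univ : Finset (Fin k → G)),
        (c f : ℝ) ≤ if p f then (N:ℝ) else (N:ℝ)*δ := by
      intro f _
      by_cases hf : p f
      · rw [if_pos hf]
        refine (hc f).trans ?_
        have hidx1 : (1:ℝ)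
            ≤ ((Subgroup.centralizer ({FreeGroup.lift f w} : Set G)).index : ℝ) := by
          exact_mod_cast Nat.one_le_iff_ne_zero.mpr Subgroup.index_ne_zero_of_finite
        exact div_le_self (le_of_lt hNR) hidx1
      · rw [if_neg hf]
        refine (hc f).trans ?_
        have hf' : 1/δ ≤ ((Subgroup.centralizer ({FreeGroup.lift f w} : Set G)).index : ℝ) := by
          simpa [hp] using not_lt.mp hf
        have hidxpos : (0:ℝ)
            < ((Subgroup.centralizer ({FreeGroup.lift f w} : Set G)).index : ℝ) :=
          lt_of_lt_of_le (by positivity) hf'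
        rw [div_le_iff₀ hidxpos]
        have h1 : (1:ℝ) ≤ ((Subgroup.centralizer ({FreeGroup.lift f w} : Set G)).index : ℝ) * δ := by
          rw [← div_le_iff₀ hδ]
          exact hf'
        nlinarith
    calc (∑ f : Fin k → G, (c f : ℝ))
        ≤ ∑ f : Fin k → G, (if p f then (N:ℝ) else (N:ℝ)*δ) := Finset.sum_le_sum hb
      _ = (A.card : ℝ) * N + (B.card : ℝ) * ((N:ℝ) * δ) := by
          rw [Finset.sum_ite, Finset.sum_const, Finset.sum_const, ← hA, ← hB]
          simp [nsmul_eq_mul]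
  -- put it together
  have hTsum : (T:ℝ) = ((∑ f : Fin k → G, c f : ℕ) : ℝ) := by exact_mod_cast htotal
  have hmain : ε * (N:ℝ)^(k+1) ≤ (A.card : ℝ) * N + (B.card : ℝ) * ((N:ℝ) * δ) := by
    rw [← hTsum] at hsum
    linarith
  have key : ε * (N:ℝ)^k ≤ (A.card : ℝ) + (B.card : ℝ) * δ := by
    have h1 : (ε * (N:ℝ)^k) * N ≤ ((A.card : ℝ) + (B.card : ℝ) * δ) * N := by
      calc (ε * (N:ℝ)^k) * N = ε * (N:ℝ)^(k+1) := by ring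
        _ ≤ (A.card : ℝ) * N + (B.card : ℝ) * ((N:ℝ) * δ) := hmain
        _ = ((A.card : ℝ) + (B.card : ℝ) * δ) * N := by ring
    exact le_of_mul_le_mul_right h1 hNR
  -- conclude
  have hP : (0:ℝ) < (ε - δ) * (N:ℝ)^k := mul_pos (sub_pos.mpr hδε) hNk
  have hA1 : (ε - δ) * (N:ℝ)^k ≤ (A.card : ℝ) := by
    have hAδ : (0:ℝ) ≤ (A.card : ℝ) * δ := mul_nonneg (Nat.cast_nonneg _) hδ.le
    nlinarith [key, hAB]
  have hA0 : (0:ℝ) < (A.card : ℝ) := lt_of_lt_of_le hP hA1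
  have hstrict : (ε - δ) * (N:ℝ)^k < (A.card : ℝ) := by
    have hAδ : (0:ℝ) < (A.card : ℝ) * δ := mul_pos hA0 hδ
    nlinarith [key, hAB]
  rw [lt_div_iff₀ hNk]
  calc (ε - δ) * (N:ℝ)^k < (A.card : ℝ) := hstrict
    _ = (Nat.card {f : Fin k → G // p f} : ℝ) := by rw [hAcard]
end

section
/- Let w = w(x_1, …, x_k) be a word, let w' = [w, x_{k+1}], and let G be a finite group. Suppose P_{G,w'}(g) ≥ ε for some g ∈ G and some ε > 0, and let 0 < δ < ε. Let n = ⌊1/δ⌋, let N = G(S_n) be the intersection of the kernels of all homomorphisms from G to the symmetric group S_n, and set M = C_G(N), the centralizer of N in G. Then M is normal in G and P_{G/M, w}(1) > ε − δ. -/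
open scoped Classical

instance kerInt_normal (G H : Type*) [Group G] [Group H] : (kerInt G H).Normal := by
  constructor
  intro x hx g
  rw [kerInt, Subgroup.mem_iInf] at hx ⊢
  intro φ
  exact φ.normal_ker.conj_mem x (hx φ) g

instance centralizer_kerInt_normal (G H : Type*) [Group G] [Group H] :
    (Subgroup.centralizer ((kerInt G H : Subgroup G) : Set G)).Normal := by
  constructor
  intro x hx g
  rw [Subgroup.mem_centralizer_iff] at hx ⊢
  intro m hm
  have hm' : g⁻¹ * m * g ∈ kerInt G H := by
    simpa using (kerInt_normal G H).conj_mem m hm g⁻¹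
  have h1 := hx (g⁻¹ * m * g) hm'
  have h2 : m * (g * x * g⁻¹) = g * ((g⁻¹ * m * g) * x) * g⁻¹ := by group
  rw [h2, h1]; group

lemma lift_map_comp {k m : ℕ} {G : Type*} [Group G] (g : Fin k → Fin m) (f : Fin m → G)
    (w : FreeGroup (Fin k)) :
    FreeGroup.lift f (FreeGroup.map g w) = FreeGroup.lift (f ∘ g) w := by
  have : (FreeGroup.lift f).comp (FreeGroup.map g) = FreeGroup.lift (f ∘ g) := by
    ext x; simp
  exact DFunLike.congr_fun this w

lemma lift_snoc {k : ℕ} {G : Type*} [Group G] (F : Fin (k+1) → G) (w : FreeGroup (Fin k)) :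
    FreeGroup.lift F (pcomm (FreeGroup.map Fin.castSucc w) (FreeGroup.of (Fin.last k))) =
      pcomm (FreeGroup.lift (F ∘ Fin.castSucc) w) (F (Fin.last k)) := by
  simp [pcomm, lift_map_comp]

lemma lift_comp_quot {k : ℕ} {G H : Type*} [Group G] [Group H] (q : G →* H) (f : Fin k → G)
    (w : FreeGroup (Fin k)) :
    FreeGroup.lift (fun i => q (f i)) w = q (FreeGroup.lift f w) := by
  have : FreeGroup.lift (fun i => q (f i)) = q.comp (FreeGroup.lift f) := by
    ext x; simp
  rw [this]; rfl

lemma card_wprime {k : ℕ} {G : Type*} [Group G] [Fintype G] (w : FreeGroup (Fin k)) (g : G) :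
    Nat.card {F : Fin (k+1) → G //
      FreeGroup.lift F (pcomm (FreeGroup.map Fin.castSucc w) (FreeGroup.of (Fin.last k))) = g} =
    ∑ f : Fin k → G, Nat.card {y : G // pcomm (FreeGroup.lift f w) y = g} := by
  have e : {F : Fin (k+1) → G //
      FreeGroup.lift F (pcomm (FreeGroup.map Fin.castSucc w) (FreeGroup.of (Fin.last k))) = g} ≃
      Σ f : Fin k → G, {y : G // pcomm (FreeGroup.lift f w) y = g} := by
    refine Equiv.trans (Equiv.subtypeEquiv (Fin.snocEquiv (fun _ => G)).symm
      (fun F => ?_) :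
        _ ≃ {p : G × (Fin k → G) // pcomm (FreeGroup.lift p.2 w) p.1 = g}) ?_
    · rw [lift_snoc]; exact Iff.rfl
    · refine Equiv.trans (Equiv.subtypeEquiv (Equiv.prodComm G (Fin k → G))
        (fun p => Iff.rfl) :
          _ ≃ {p : (Fin k → G) × G // pcomm (FreeGroup.lift p.1 w) p.2 = g}) ?_
      exact Equiv.subtypeProdEquivSigmaSubtype (fun f y => pcomm (FreeGroup.lift f w) y = g)
  rw [Nat.card_congr e, Nat.card_eq_fintype_card, Fintype.card_sigma]
  refine Finset.sum_congr rfl (fun f _ => ?_)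
  rw [← Nat.card_eq_fintype_card]

lemma card_comm_fiber_le {G : Type*} [Group G] [Fintype G] (m g : G) :
    Nat.card {y : G // pcomm m y = g} ≤ Nat.card (Subgroup.centralizer ({m} : Set G)) := by
  rcases isEmpty_or_nonempty {y : G // pcomm m y = g} with he | ⟨⟨y₀, hy₀⟩⟩
  · simp
  · have key : ∀ y : G, pcomm m y = g → y⁻¹ * m * y = m * g := by
      intro y hy
      simp only [pcomm] at hy
      rw [← hy]; group
    have e2 := key y₀ hy₀
    refine Nat.card_le_card_of_injective (fun y =>
        (⟨y.1 * y₀⁻¹, ?_⟩ : Subgroup.centralizer ({m} : Set G))) ?_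
    · rw [Subgroup.mem_centralizer_iff]
      rintro x rfl
      have e1 := key y.1 y.2
      calc x * (y.1 * y₀⁻¹) = y.1 * (y.1⁻¹ * x * y.1) * y₀⁻¹ := by group
        _ = y.1 * (y₀⁻¹ * x * y₀) * y₀⁻¹ := by rw [e1, e2]
        _ = (y.1 * y₀⁻¹) * x := by group
    · intro a b hab
      have h1 : a.1 * y₀⁻¹ = b.1 * y₀⁻¹ := congrArg Subtype.val hab
      ext
      exact mul_right_cancel h1

lemma mem_centralizer_of_index_le {G : Type*} [Group G] [Finite G] (h : G) (n : ℕ)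
    (hle : (Subgroup.centralizer ({h} : Set G)).index ≤ n) :
    h ∈ Subgroup.centralizer ((kerInt G (Equiv.Perm (Fin n)) : Subgroup G) : Set G) := by
  set H := Subgroup.centralizer ({h} : Set G) with hH
  obtain ⟨ι⟩ : Nonempty ((G ⧸ H) ↪ Fin n) := by
    have : Fintype (G ⧸ H) := Fintype.ofFinite _
    refine Function.Embedding.nonempty_of_card_le ?_
    have : Nat.card (G ⧸ H) ≤ n := by rw [← Subgroup.index_eq_card]; exact hle
    simpa [Nat.card_eq_fintype_card] using this
  set φ := MulAction.toPermHom G (G ⧸ H) with hφdef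
  set ψ := (Equiv.Perm.viaEmbeddingHom ι).comp φ with hψdef
  rw [Subgroup.mem_centralizer_iff]
  intro m hm
  have hψ : ψ m = 1 := by
    have hle2 : kerInt G (Equiv.Perm (Fin n)) ≤ ψ.ker := iInf_le _ ψ
    exact hle2 hm
  have hφ1 : φ m = 1 := Equiv.Perm.viaEmbeddingHom_injective ι (by simpa [hψdef] using hψ)
  have h1 : m • ((1 : G) : G ⧸ H) = ((1 : G) : G ⧸ H) :=
    Equiv.ext_iff.mp hφ1 ((1 : G) : G ⧸ H)
  have hmH : m ∈ H := by
    rw [MulAction.Quotient.smul_mk, smul_eq_mul, mul_one] at h1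
    have := QuotientGroup.eq.mp h1
    simpa using inv_mem this
  exact ((Subgroup.mem_centralizer_iff.mp hmH) h rfl).symm

lemma card_preimage {α β : Type*} [Fintype α] [Fintype β] (p : α → β) (P : β → Prop)
    (c : ℕ) (hc : ∀ b, Nat.card {a // p a = b} = c) :
    Nat.card {a // P (p a)} = Nat.card {b // P b} * c := by
  have e := Equiv.sigmaSubtypeFiberEquivSubtype p (p := fun a => P (p a)) (q := P)
    (fun x => Iff.rfl)
  rw [← Nat.card_congr e, Nat.card_eq_fintype_card, Nat.card_eq_fintype_card,
    Fintype.card_sigma]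
  have hc' : ∀ b : Subtype P, Fintype.card {x // p x = b.1} = c := fun b => by
    rw [← Nat.card_eq_fintype_card]; exact hc b.1
  calc ∑ x : Subtype P, Fintype.card {x1 // p x1 = x.1}
      = ∑ _x : Subtype P, c := Finset.sum_congr rfl (fun b _ => hc' b)
    _ = Fintype.card (Subtype P) * c := by
        rw [Finset.sum_const, smul_eq_mul, Finset.card_univ]

lemma card_quot_fiber {G : Type*} [Group G] [Fintype G] (M : Subgroup G) (y : G ⧸ M) :
    Nat.card {x : G // (x : G ⧸ M) = y} = Nat.card M := by
  refine Nat.card_congr ⟨fun x => ⟨y.out⁻¹ * x.1, ?_⟩, fun m => ⟨y.out * m.1, ?_⟩, ?_, ?_⟩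
  · rw [← QuotientGroup.eq]
    rw [x.2]
    exact (QuotientGroup.out_eq' y)
  · have hye : ((y.out : G) : G ⧸ M) = y := QuotientGroup.out_eq' y
    rw [← hye, QuotientGroup.eq]
    simpa using m.2
  · intro x; ext; simp
  · intro m; ext; simp

lemma card_tuple_quot {k : ℕ} {G : Type*} [Group G] [Fintype G] (M : Subgroup G) [M.Normal]
    (w : FreeGroup (Fin k)) :
    Nat.card {f : Fin k → G // FreeGroup.lift f w ∈ M} =
      Nat.card {F : Fin k → G ⧸ M // FreeGroup.lift F w = 1} * Nat.card M ^ k := by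
  classical
  have : Fintype (G ⧸ M) := Fintype.ofFinite _
  have hfib : ∀ F : Fin k → G ⧸ M,
      Nat.card {f : Fin k → G // (fun i => ((f i : G ⧸ M))) = F} = Nat.card M ^ k := by
    intro F
    have e1 : {f : Fin k → G // (fun i => ((f i : G ⧸ M))) = F} ≃
        ∀ i, {x : G // (x : G ⧸ M) = F i} :=
      (Equiv.subtypeEquivRight (fun f => funext_iff)).trans
        (Equiv.subtypePiEquivPi (p := fun i (x : G) => (x : G ⧸ M) = F i))
    rw [Nat.card_congr e1, Nat.card_pi]
    calc ∏ i, Nat.card {x : G // (x : G ⧸ M) = F i}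
        = ∏ _i : Fin k, Nat.card M :=
          Finset.prod_congr rfl (fun i _ => card_quot_fiber M (F i))
      _ = Nat.card M ^ k := by
          rw [Finset.prod_const, Finset.card_univ, Fintype.card_fin]
  have key := card_preimage (fun (f : Fin k → G) => fun i => ((f i : G ⧸ M)))
    (fun F => FreeGroup.lift F w = 1) (Nat.card M ^ k) hfib
  rw [← key]
  refine Nat.card_congr (Equiv.subtypeEquivRight (fun f => ?_))
  have h2 : FreeGroup.lift (fun i => ((f i : G ⧸ M))) w =
      ((FreeGroup.lift f w : G) : G ⧸ M) := lift_comp_quot (QuotientGroup.mk' M) f w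
  show FreeGroup.lift f w ∈ M ↔ FreeGroup.lift (fun i => ((f i : G ⧸ M))) w = 1
  rw [h2, QuotientGroup.eq_one_iff]


/-- Proposition 2.2: With `w' = [w, x_{k+1}]`, `P_{G,w'}(g) ≥ ε`,
`0 < δ < ε`, `n = ⌊1/δ⌋`, `N = G(S_n)` and `M = C_G(N)`: `M` is normal in `G` and
`P_{G/M, w}(1) > ε - δ`. -/
theorem stmt13 (k : ℕ) (w : FreeGroup (Fin k)) (G : Type*) [Group G] [Finite G]
    (ε δ : ℝ) (hδ : 0 < δ) (hδε : δ < ε) (g : G)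
    (h : ε ≤ wordProb (pcomm (FreeGroup.map Fin.castSucc w) (FreeGroup.of (Fin.last k))) g)
    (n : ℕ) (hn : n = Nat.floor (1 / δ)) :
    (Subgroup.centralizer ((kerInt G (Equiv.Perm (Fin n)) : Subgroup G) : Set G)).Normal ∧
      ε - δ < wordProb w
        (1 : G ⧸ Subgroup.centralizer ((kerInt G (Equiv.Perm (Fin n)) : Subgroup G) : Set G)) := by
  refine ⟨inferInstance, ?_⟩
  classical
  letI : Fintype G := Fintype.ofFinite G
  set M := Subgroup.centralizer ((kerInt G (Equiv.Perm (Fin n)) : Subgroup G) : Set G) with hMdef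
  have hcGpos : 0 < (Nat.card G : ℝ) := by
    have : 0 < Nat.card G := Nat.card_pos
    exact_mod_cast this
  set cG : ℝ := (Nat.card G : ℝ) with hcGdef
  set T : (Fin k → G) → ℕ := fun f => Nat.card {y : G // pcomm (FreeGroup.lift f w) y = g}
    with hTdef
  -- Step 1 : ε * cG^(k+1) ≤ total count
  have h1 : ε * cG ^ (k+1) ≤ (Nat.card {F : Fin (k+1) → G // FreeGroup.lift F
      (pcomm (FreeGroup.map Fin.castSucc w) (FreeGroup.of (Fin.last k))) = g} : ℝ) := by
    rw [wordProb] at h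
    have hpow : (0:ℝ) < cG ^ (k+1) := by positivity
    calc ε * cG ^ (k+1) ≤ _ / cG ^ (k+1) * cG ^ (k+1) :=
          mul_le_mul_of_nonneg_right h hpow.le
      _ = _ := div_mul_cancel₀ _ hpow.ne'
  -- Step 2 : total count = sum of T
  have h2 : (Nat.card {F : Fin (k+1) → G // FreeGroup.lift F
      (pcomm (FreeGroup.map Fin.castSucc w) (FreeGroup.of (Fin.last k))) = g} : ℝ) =
      ∑ f : Fin k → G, (T f : ℝ) := by
    rw_mod_cast [card_wprime w g]
  -- per-f bounds
  have hTle : ∀ f : Fin k → G, (T f : ℝ) ≤ cG := by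
    intro f
    have hle : T f ≤ Nat.card G :=
      Nat.card_le_card_of_injective Subtype.val Subtype.val_injective
    rw [hcGdef]
    exact_mod_cast hle
  have hTsmall : ∀ f : Fin k → G, FreeGroup.lift f w ∉ M →
      (T f : ℝ) ≤ cG / (n + 1) := by
    intro f hf
    set m := FreeGroup.lift f w with hmdef
    have hidx : n + 1 ≤ (Subgroup.centralizer ({m} : Set G)).index := by
      by_contra hcon
      push_neg at hcon
      exact hf (mem_centralizer_of_index_le m n (Nat.lt_succ_iff.mp hcon))
    have hmul : Nat.card (Subgroup.centralizer ({m} : Set G)) *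
        (Subgroup.centralizer ({m} : Set G)).index = Nat.card G :=
      Subgroup.card_mul_index _
    have hnat : T f * (n + 1) ≤ Nat.card G := by
      calc T f * (n + 1)
          ≤ Nat.card (Subgroup.centralizer ({m} : Set G)) * (n + 1) :=
            Nat.mul_le_mul_right _ (card_comm_fiber_le m g)
        _ ≤ Nat.card (Subgroup.centralizer ({m} : Set G)) *
              (Subgroup.centralizer ({m} : Set G)).index :=
            Nat.mul_le_mul_left _ hidx
        _ = Nat.card G := hmul
    rw [le_div_iff₀ (by positivity), hcGdef]
    exact_mod_cast hnat
  -- split the sum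
  set S : Finset (Fin k → G) := Finset.univ.filter (fun f => FreeGroup.lift f w ∈ M) with hSdef
  set A : ℕ := Nat.card {f : Fin k → G // FreeGroup.lift f w ∈ M} with hAdef
  have hScard : S.card = A := by
    rw [hAdef, Nat.card_eq_fintype_card, Fintype.card_subtype]
  have hsplit : ∑ f : Fin k → G, (T f : ℝ) =
      ∑ f ∈ S, (T f : ℝ) + ∑ f ∈ Finset.univ.filter (fun f => ¬ FreeGroup.lift f w ∈ M),
        (T f : ℝ) :=
    (Finset.sum_filter_add_sum_filter_not _ _ _).symm
  have hS1 : ∑ f ∈ S, (T f : ℝ) ≤ (A : ℝ) * cG := by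
    calc ∑ f ∈ S, (T f : ℝ) ≤ S.card • cG := Finset.sum_le_card_nsmul _ _ _ (fun f _ => hTle f)
      _ = (A : ℝ) * cG := by rw [nsmul_eq_mul, hScard]
  have hS2 : ∑ f ∈ Finset.univ.filter (fun f => ¬ FreeGroup.lift f w ∈ M), (T f : ℝ) ≤
      cG ^ k * (cG / (n + 1)) := by
    calc ∑ f ∈ Finset.univ.filter (fun f => ¬ FreeGroup.lift f w ∈ M), (T f : ℝ)
        ≤ (Finset.univ.filter (fun f => ¬ FreeGroup.lift f w ∈ M)).card • (cG / (n + 1)) :=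
          Finset.sum_le_card_nsmul _ _ _
            (fun f hf => hTsmall f (by simpa using (Finset.mem_filter.mp hf).2))
      _ ≤ (Fintype.card (Fin k → G) : ℝ) * (cG / (n + 1)) := by
          rw [nsmul_eq_mul]
          refine mul_le_mul_of_nonneg_right ?_ (by positivity)
          exact_mod_cast Finset.card_le_card (Finset.subset_univ _) |>.trans
            (le_of_eq (Finset.card_univ))
      _ = cG ^ k * (cG / (n + 1)) := by
          rw [Fintype.card_fun, Fintype.card_fin, hcGdef, Nat.card_eq_fintype_card]
          push_cast
          ring
  -- the strict bound
  have hfloor : (1 : ℝ) / (n + 1) < δ := by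
    have hlt : (1 / δ : ℝ) < n + 1 := by
      rw [hn]
      exact_mod_cast Nat.lt_floor_add_one (1 / δ)
    rw [div_lt_iff₀ (by positivity)] at hlt ⊢
    nlinarith
  have hstrict : cG ^ k * (cG / (n + 1)) < δ * cG ^ (k + 1) := by
    have he : cG ^ k * (cG / (n + 1)) = (1 / (n + 1)) * cG ^ (k + 1) := by ring
    rw [he]
    exact mul_lt_mul_of_pos_right hfloor (by positivity)
  -- combine
  have hcomb : ε * cG ^ (k + 1) < (A : ℝ) * cG + δ * cG ^ (k + 1) := by
    calc ε * cG ^ (k + 1) ≤ ∑ f : Fin k → G, (T f : ℝ) := h1.trans_eq h2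
      _ = _ + _ := hsplit
      _ ≤ (A : ℝ) * cG + cG ^ k * (cG / (n + 1)) := add_le_add hS1 hS2
      _ < (A : ℝ) * cG + δ * cG ^ (k + 1) := by linarith
  have hfinal : ε - δ < (A : ℝ) / cG ^ k := by
    rw [lt_div_iff₀ (by positivity)]
    have hexp : cG ^ (k + 1) = cG ^ k * cG := by ring
    nlinarith [pow_pos hcGpos k]
  -- identify the word probability
  have hq : wordProb w (1 : G ⧸ M) = (A : ℝ) / cG ^ k := by
    rw [wordProb]
    set B : ℕ := Nat.card {F : Fin k → G ⧸ M // FreeGroup.lift F w = 1} with hBdef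
    have hAB : A = B * Nat.card M ^ k := card_tuple_quot M w
    have hprod : Nat.card (G ⧸ M) * Nat.card M = Nat.card G := by
      rw [← Subgroup.index_eq_card, mul_comm]
      exact Subgroup.card_mul_index M
    have hMpos : 0 < (Nat.card M : ℝ) := by
      have : 0 < Nat.card M := Nat.card_pos
      exact_mod_cast this
    have hQpos : 0 < (Nat.card (G ⧸ M) : ℝ) := by
      have : 0 < Nat.card (G ⧸ M) := Nat.card_pos
      exact_mod_cast this
    rw [div_eq_div_iff (by positivity) (by positivity)]
    have hprodR : (Nat.card (G ⧸ M) : ℝ) * (Nat.card M : ℝ) = cG := by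
      rw [hcGdef]; exact_mod_cast hprod
    have hABR : (A : ℝ) = (B : ℝ) * (Nat.card M : ℝ) ^ k := by exact_mod_cast hAB
    calc (B : ℝ) * cG ^ k = (B : ℝ) * ((Nat.card (G ⧸ M) : ℝ) * (Nat.card M : ℝ)) ^ k := by
          rw [hprodR]
      _ = ((B : ℝ) * (Nat.card M : ℝ) ^ k) * (Nat.card (G ⧸ M) : ℝ) ^ k := by ring
      _ = (A : ℝ) * (Nat.card (G ⧸ M) : ℝ) ^ k := by rw [← hABR]
  rw [hq]
  exact hfinal
end
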